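/- arXiv:math/0610829 — 2 statements merged into one kernel-verified Lean document; each statement's English description precedes it below -/
import Mathlib

section
/- Let $M$ be a normal $d$-pseudomanifold and let $N$ be a $(d-1)$-dimensional induced subcomplex of $M$ which is a normal $(d-1)$-pseudomanifold. Then the simplicial complement $C(N,M)$ has at most two connected components. -/
open Finset

noncomputable section

attribute [local instance] Classical.propDecidable

variable {V : Type} [DecidableEq V]

/-- A (finite abstract) simplicial complex: a finite family of nonempty finite sets (faces)
closed under taking nonempty subsets. -/
def IsComplex (K : Finset (Finset V)) : Prop :=
  (∀ s ∈ K, s.Nonempty) ∧ ∀ s ∈ K, ∀ t ⊆ s, t.Nonempty → t ∈ K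

/-- The vertex set of a complex: the union of its faces. -/
def vertexSet (K : Finset (Finset V)) : Finset V := K.sup id

/-- A facet is a maximal face. -/
def IsFacet (K : Finset (Finset V)) (s : Finset V) : Prop :=
  s ∈ K ∧ ∀ t ∈ K, s ⊆ t → s = t

/-- A complex is pure of dimension `d` if it is nonempty and every facet has `d + 1` vertices. -/
def IsPure (K : Finset (Finset V)) (d : ℕ) : Prop :=
  K.Nonempty ∧ ∀ s, IsFacet K s → s.card = d + 1

/-- The edge graph (1-skeleton) of a complex. -/
def edgeGraph (K : Finset (Finset V)) : SimpleGraph V where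
  Adj x y := x ≠ y ∧ ({x, y} : Finset V) ∈ K
  symm := by
    constructor
    intro x y h
    refine ⟨h.1.symm, ?_⟩
    rw [Finset.pair_comm]
    exact h.2
  loopless := by
    constructor
    intro x h
    exact h.1 rfl

/-- A complex is connected if it has a vertex and any two of its vertices are joined by a
path in its edge graph. -/
def CConnected (K : Finset (Finset V)) : Prop :=
  (vertexSet K).Nonempty ∧
    ∀ u ∈ vertexSet K, ∀ v ∈ vertexSet K, (edgeGraph K).Reachable u v

/-- The link of a face `α`: all faces `β` disjoint from `α` with `α ∪ β` a face. -/
def link (K : Finset (Finset V)) (α : Finset V) : Finset (Finset V) :=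
  K.filter fun β => Disjoint α β ∧ α ∪ β ∈ K

/-- The number of edges (1-dimensional faces) of a complex. -/
def edgeCount (K : Finset (Finset V)) : ℕ := (K.filter fun s => s.card = 2).card

/-- A weak pseudomanifold of dimension `d`: a pure `d`-dimensional complex in which every
`(d-1)`-dimensional face lies in exactly two facets. -/
def IsWeakPM (K : Finset (Finset V)) (d : ℕ) : Prop :=
  IsComplex K ∧ IsPure K d ∧
    ∀ s ∈ K, s.card = d → (K.filter fun t => IsFacet K t ∧ s ⊆ t).card = 2

/-- A normal `d`-pseudomanifold: a connected weak pseudomanifold of dimension `d` in which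
the link of every face of dimension at most `d - 2` is connected. -/
def IsNormalPM (K : Finset (Finset V)) (d : ℕ) : Prop :=
  IsWeakPM K d ∧ CConnected K ∧
    ∀ s ∈ K, s.card ≤ d - 1 → CConnected (link K s)

/-- The standard `d`-sphere: the complex of all nonempty proper subsets of a `(d+2)`-set. -/
def IsStandardSphere (K : Finset (Finset V)) (d : ℕ) : Prop :=
  ∃ A : Finset V, A.card = d + 2 ∧ K = A.powerset.filter fun s => s.Nonempty ∧ s ≠ A

/-- `StarringOf X Y` : `Y` is obtained from `X` by starring a new vertex `v` in a facet
`σ` of `X`, i.e. by replacing the facet `σ` with the cone with apex `v` over its boundary. -/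
def StarringOf (X Y : Finset (Finset V)) : Prop :=
  ∃ (σ : Finset V) (v : V), IsFacet X σ ∧ v ∉ vertexSet X ∧
    Y = X.erase σ ∪ (σ.powerset.filter fun τ => τ ≠ σ).image fun τ => insert v τ

/-- A stacked `d`-sphere: a complex obtained from the standard `d`-sphere by a finite
sequence of starrings. -/
def IsStackedSphere (K : Finset (Finset V)) (d : ℕ) : Prop :=
  ∃ S : Finset (Finset V), IsStandardSphere S d ∧ Relation.ReflTransGen StarringOf S K

/-- The induced subcomplex on a set `U` of vertices. -/
def induced (K : Finset (Finset V)) (U : Finset V) : Finset (Finset V) :=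
  K.filter fun s => s ⊆ U

/-- The simplicial complement of the induced subcomplex on `U`: the induced subcomplex on
the complementary set of vertices. -/
def simpComplement (K : Finset (Finset V)) (U : Finset V) : Finset (Finset V) :=
  induced K (vertexSet K \ U)

/-- The degree of a vertex: the number of vertices of its link. -/
def vertDegree (K : Finset (Finset V)) (v : V) : ℕ := (vertexSet (link K {v})).card

/-- `farApart G x y` : the distance from `x` to `y` in the graph `G` is at least `3`
(where unreachable counts as infinite distance). -/
def farApart (G : SimpleGraph V) (x y : V) : Prop :=
  x ≠ y ∧ ¬ G.Adj x y ∧ ∀ z : V, ¬ (G.Adj x z ∧ G.Adj z y)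

/-- `Admissible X σ₁ σ₂ ψ` : `σ₁, σ₂` are disjoint facets of `X` and `ψ` restricts to a
bijection from `σ₁` onto `σ₂` moving every `x ∈ σ₁` to distance at least 3 from itself. -/
def Admissible (X : Finset (Finset V)) (σ₁ σ₂ : Finset V) (ψ : V → V) : Prop :=
  IsFacet X σ₁ ∧ IsFacet X σ₂ ∧ Disjoint σ₁ σ₂ ∧ Set.BijOn ψ ↑σ₁ ↑σ₂ ∧
    ∀ x ∈ σ₁, farApart (edgeGraph X) x (ψ x)

/-- Elementary handle addition `X^ψ`: remove the two facets `σ₁, σ₂` and identify each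
`x ∈ σ₁` with `ψ x ∈ σ₂`. -/
def handleAdd (X : Finset (Finset V)) (σ₁ σ₂ : Finset V) (ψ : V → V) :
    Finset (Finset V) :=
  ((X.erase σ₁).erase σ₂).image fun s => s.image fun x => if x ∈ σ₁ then ψ x else x

/-- Isomorphism of simplicial complexes: an injection on vertices carrying the faces of one
complex exactly onto the faces of the other. -/
def CplxIso {W : Type} [DecidableEq W] (K : Finset (Finset V)) (L : Finset (Finset W)) :
    Prop :=
  ∃ f : V → W, Set.InjOn f ↑(vertexSet K) ∧ L = K.image fun s => s.image f

/-- The connected component of the complex `K` containing the vertex `v` (as a subcomplex). -/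
def componentOf (K : Finset (Finset V)) (v : V) : Finset (Finset V) :=
  K.filter fun s => ∀ x ∈ s, (edgeGraph K).Reachable v x

/-- The edges of `M` having exactly one end in `A`. -/
def crossEdges (M : Finset (Finset V)) (A : Finset V) : Finset (Finset V) :=
  M.filter fun e => e.card = 2 ∧ (e ∩ A).card = 1

/-- The graph whose vertices are the edges of `M` with exactly one end in `A`, two of them
being adjacent when the union of the corresponding edges is a 2-dimensional face of `M`. -/
def crossGraph (M : Finset (Finset V)) (A : Finset V) : SimpleGraph (Finset V) where
  Adj e f := e ≠ f ∧ e ∈ crossEdges M A ∧ f ∈ crossEdges M A ∧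
    e ∪ f ∈ M ∧ (e ∪ f).card = 3
  symm := by
    constructor
    intro e f h
    obtain ⟨h1, h2, h3, h4, h5⟩ := h
    exact ⟨h1.symm, h3, h2, by rwa [Finset.union_comm], by rwa [Finset.union_comm]⟩
  loopless := by
    constructor
    intro e h
    exact h.1 rfl

/-- The class `𝒦(d)`: normal `d`-pseudomanifolds all of whose vertex links are stacked
`(d-1)`-spheres. -/
def InClassK (K : Finset (Finset V)) (d : ℕ) : Prop :=
  IsNormalPM K d ∧ ∀ v ∈ vertexSet K, IsStackedSphere (link K {v}) (d - 1)

/-- The total number of partitions of `n`. -/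
def numPartitions (n : ℕ) : ℕ := Fintype.card (Nat.Partition n)

/-- The number of even partitions of `n` (those with an even number of even parts). -/
def numEvenPartitions (n : ℕ) : ℕ :=
  Fintype.card {p : Nat.Partition n // Even (Multiset.card (p.parts.filter fun i => Even i))}

/-- The number of odd partitions of `n` (those with an odd number of even parts). -/
def numOddPartitions (n : ℕ) : ℕ :=
  Fintype.card {p : Nat.Partition n // Odd (Multiset.card (p.parts.filter fun i => Even i))}

/-- The facets of `N^{d+1}_{m+d+1}` : the sets of `d+2` consecutive integers inside
`{1, …, m+d+1}`. -/
def NFacets (d m : ℕ) : Finset (Finset ℕ) :=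
  (Finset.Icc 1 m).image fun k => Finset.Icc k (k + d + 1)

/-- The complex `N^{d+1}_{m+d+1}` on vertex set `{1, …, m+d+1}` whose facets are the sets
of `d+2` consecutive integers. -/
def Ncomplex (d m : ℕ) : Finset (Finset ℕ) :=
  ((NFacets d m).biUnion Finset.powerset).filter fun s => s.Nonempty

/-- The facets of the boundary complex `∂N^{d+1}_{m+d+1}` : the `(d+1)`-element subsets of
`{1, …, m+d+1}` contained in exactly one facet of `N^{d+1}_{m+d+1}`. -/
def boundaryNFacets (d m : ℕ) : Finset (Finset ℕ) :=
  (Finset.Icc 1 (m + d + 1)).powerset.filter fun s =>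
    s.card = d + 1 ∧ ((Finset.Icc 1 m).filter fun k => s ⊆ Finset.Icc k (k + d + 1)).card = 1

/-- The boundary complex `∂N^{d+1}_{m+d+1}`. -/
def boundaryN (d m : ℕ) : Finset (Finset ℕ) :=
  ((boundaryNFacets d m).biUnion Finset.powerset).filter fun s => s.Nonempty


/-! ### Auxiliary lemmas -/

section Aux

variable {K M N : Finset (Finset V)} {A : Finset V}

lemma mem_vertexSet_iff {v : V} : v ∈ vertexSet K ↔ ∃ s ∈ K, v ∈ s := by
  simp [vertexSet, Finset.mem_sup]

lemma subset_vertexSet {s : Finset V} (hs : s ∈ K) : s ⊆ vertexSet K :=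
  fun v hv => mem_vertexSet_iff.2 ⟨s, hs, hv⟩

lemma singleton_mem_of_vertex (hK : IsComplex K) {v : V} (hv : v ∈ vertexSet K) :
    ({v} : Finset V) ∈ K := by
  obtain ⟨s, hs, hvs⟩ := mem_vertexSet_iff.1 hv
  exact hK.2 s hs {v} (Finset.singleton_subset_iff.2 hvs) ⟨v, Finset.mem_singleton_self v⟩

lemma pair_mem_of_mem (hK : IsComplex K) {s : Finset V} (hs : s ∈ K) {x y : V}
    (hx : x ∈ s) (hy : y ∈ s) : ({x, y} : Finset V) ∈ K := by
  refine hK.2 s hs {x, y} ?_ ⟨x, by simp⟩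
  intro z hz
  rcases Finset.mem_insert.1 hz with h | h
  · exact h ▸ hx
  · exact (Finset.mem_singleton.1 h) ▸ hy

lemma exists_facet {s : Finset V} (hs : s ∈ K) : ∃ τ, IsFacet K τ ∧ s ⊆ τ := by
  classical
  obtain ⟨τ, hτmax⟩ := Finset.exists_maximal (s := K.filter fun t => s ⊆ t)
    ⟨s, Finset.mem_filter.2 ⟨hs, Finset.Subset.refl s⟩⟩
  have hτ := hτmax.prop
  have hmax : ∀ t ∈ K.filter (fun t => s ⊆ t), ¬ τ < t :=
    fun t ht hlt => lt_irrefl τ (lt_of_lt_of_le hlt (hτmax.2 ht hlt.le))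
  rw [Finset.mem_filter] at hτ
  refine ⟨τ, ⟨hτ.1, ?_⟩, hτ.2⟩
  intro t ht hsub
  by_contra hne
  exact hmax t (Finset.mem_filter.2 ⟨ht, hτ.2.trans hsub⟩)
    (lt_of_le_of_ne hsub (fun h => hne h))

lemma card_le_of_pure {d : ℕ} (hp : IsPure K d) {s : Finset V} (hs : s ∈ K) :
    s.card ≤ d + 1 := by
  obtain ⟨τ, hτ, hsub⟩ := exists_facet hs
  exact le_trans (Finset.card_le_card hsub) (le_of_eq (hp.2 τ hτ))

lemma facet_of_card {d : ℕ} (hp : IsPure K d) {s : Finset V} (hs : s ∈ K)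
    (hc : s.card = d + 1) : IsFacet K s := by
  obtain ⟨τ, hτ, hsub⟩ := exists_facet hs
  have : s = τ := Finset.eq_of_subset_of_card_le hsub (by rw [hp.2 τ hτ, hc])
  exact this ▸ hτ

lemma facet_of_card_eq_facetcard {d : ℕ} (hfc : ∀ t, IsFacet K t → t.card = d)
    {s : Finset V} (hs : s ∈ K) (hc : s.card = d) : IsFacet K s := by
  obtain ⟨τ, hτ, hsub⟩ := exists_facet hs
  have : s = τ := Finset.eq_of_subset_of_card_le hsub (by rw [hfc τ hτ, hc])
  exact this ▸ hτ

lemma mem_induced_iff {U : Finset V} {s : Finset V} :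
    s ∈ induced K U ↔ s ∈ K ∧ s ⊆ U := Finset.mem_filter

lemma induced_subset {U : Finset V} : induced K U ⊆ K := Finset.filter_subset _ _

lemma isComplex_induced (hK : IsComplex K) (U : Finset V) : IsComplex (induced K U) := by
  constructor
  · intro s hs; exact hK.1 s (mem_induced_iff.1 hs).1
  · intro s hs t hts htne
    rcases mem_induced_iff.1 hs with ⟨hsK, hsU⟩
    exact mem_induced_iff.2 ⟨hK.2 s hsK t hts htne, hts.trans hsU⟩

lemma mem_link_iff {α β : Finset V} :
    β ∈ link K α ↔ β ∈ K ∧ Disjoint α β ∧ α ∪ β ∈ K := Finset.mem_filter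

lemma link_subset {α : Finset V} : link K α ⊆ K := Finset.filter_subset _ _

lemma isComplex_link (hK : IsComplex K) (α : Finset V) : IsComplex (link K α) := by
  constructor
  · intro s hs; exact hK.1 s (mem_link_iff.1 hs).1
  · intro s hs t hts htne
    rcases mem_link_iff.1 hs with ⟨hsK, hdisj, hunion⟩
    refine mem_link_iff.2 ⟨hK.2 s hsK t hts htne, hdisj.mono_right hts, ?_⟩
    refine hK.2 _ hunion _ (Finset.union_subset_union (Finset.Subset.refl α) hts) ?_
    exact htne.mono Finset.subset_union_right

lemma link_empty (hK : IsComplex K) : link K ∅ = K := by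
  apply Finset.filter_true_of_mem
  intro s hs
  exact ⟨Finset.disjoint_empty_left s, by simpa using hs⟩

end Aux


section LinkLemmas

variable {K M N : Finset (Finset V)} {A : Finset V}

lemma facet_insert_of_link_facet (hK : IsComplex K) {v : V} {β : Finset V}
    (hβ : IsFacet (link K {v}) β) : IsFacet K ({v} ∪ β) := by
  rcases mem_link_iff.1 hβ.1 with ⟨hβK, hdisj, hins⟩
  refine ⟨hins, ?_⟩
  intro t ht hsub
  have hvt : v ∈ t := hsub (by simp)
  have hβ' : t \ {v} ∈ link K {v} := by
    refine mem_link_iff.2 ⟨hK.2 t ht _ (Finset.sdiff_subset) ?_, Finset.disjoint_sdiff, ?_⟩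
    · refine Finset.Nonempty.mono ?_ (hK.1 β hβK)
      intro z hz
      exact Finset.mem_sdiff.2 ⟨hsub (Finset.mem_union_right _ hz),
        fun hzv => (Finset.disjoint_left.1 hdisj hzv) hz⟩
    · rw [Finset.union_sdiff_of_subset (Finset.singleton_subset_iff.2 hvt)]
      exact ht
  have hββ' : β ⊆ t \ {v} := by
    intro z hz
    exact Finset.mem_sdiff.2 ⟨hsub (Finset.mem_union_right _ hz),
      fun hzv => (Finset.disjoint_left.1 hdisj hzv) hz⟩
  have heq := hβ.2 _ hβ' hββ'
  rw [heq, Finset.union_sdiff_of_subset (Finset.singleton_subset_iff.2 hvt)]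

lemma link_facet_of_facet (hK : IsComplex K) {v : V} {τ : Finset V}
    (hτ : IsFacet K τ) (hv : v ∈ τ) (hne : (τ \ {v}).Nonempty) :
    IsFacet (link K {v}) (τ \ {v}) := by
  have hmem : τ \ {v} ∈ link K {v} := by
    refine mem_link_iff.2 ⟨hK.2 τ hτ.1 _ Finset.sdiff_subset hne, Finset.disjoint_sdiff, ?_⟩
    rw [Finset.union_sdiff_of_subset (Finset.singleton_subset_iff.2 hv)]
    exact hτ.1
  refine ⟨hmem, ?_⟩
  intro β hβ hsub
  rcases mem_link_iff.1 hβ with ⟨hβK, hdisj, hins⟩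
  have hτsub : τ ⊆ {v} ∪ β := by
    intro z hz
    by_cases hzv : z = v
    · simp [hzv]
    · exact Finset.mem_union_right _ (hsub (Finset.mem_sdiff.2 ⟨hz, by simp [hzv]⟩))
  have heq := hτ.2 _ hins hτsub
  rw [heq, Finset.union_sdiff_cancel_left hdisj]

lemma card_sdiff_singleton {τ : Finset V} {v : V} (hv : v ∈ τ) :
    (τ \ {v}).card = τ.card - 1 := by
  rw [Finset.card_sdiff_of_subset (Finset.singleton_subset_iff.2 hv), Finset.card_singleton]

lemma card_union_singleton {s : Finset V} {v : V} (hv : v ∉ s) :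
    ({v} ∪ s).card = s.card + 1 := by
  rw [← Finset.insert_eq, Finset.card_insert_of_notMem hv]

lemma notmem_of_link_mem {v : V} {s : Finset V} (hs : s ∈ link K {v}) : v ∉ s :=
  fun h => (Finset.disjoint_left.1 (mem_link_iff.1 hs).2.1 (by simp)) h

lemma link_vertex_pure (hK : IsComplex K) {d : ℕ} (hd : 1 ≤ d) (hp : IsPure K d)
    {v : V} (hv : v ∈ vertexSet K) : IsPure (link K {v}) (d - 1) := by
  constructor
  · obtain ⟨τ, hτ, hsub⟩ := exists_facet (singleton_mem_of_vertex hK hv)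
    have hvτ : v ∈ τ := hsub (by simp)
    have hcard : τ.card = d + 1 := hp.2 τ hτ
    have hne : (τ \ {v}).Nonempty := by
      rw [← Finset.card_pos, card_sdiff_singleton hvτ, hcard]
      omega
    exact ⟨τ \ {v}, (link_facet_of_facet hK hτ hvτ hne).1⟩
  · intro β hβ
    have h1 := facet_insert_of_link_facet hK hβ
    have hc := hp.2 _ h1
    rw [card_union_singleton (notmem_of_link_mem hβ.1)] at hc
    omega

lemma link_link (hK : IsComplex K) {v : V} {s : Finset V} (hvs : v ∉ s) :
    link (link K {v}) s = link K ({v} ∪ s) := by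
  ext β
  simp only [mem_link_iff]
  constructor
  · rintro ⟨⟨hβK, hd1, hu1⟩, hd2, ⟨hsβK, hd3, hu3⟩⟩
    refine ⟨hβK, ?_, ?_⟩
    · rw [Finset.disjoint_union_left]; exact ⟨hd1, hd2⟩
    · rwa [Finset.union_assoc]
  · rintro ⟨hβK, hd, hu⟩
    rw [Finset.disjoint_union_left] at hd
    have hβne : β.Nonempty := hK.1 β hβK
    rw [Finset.union_assoc] at hu
    have hsβ : s ∪ β ∈ K :=
      hK.2 _ hu _ Finset.subset_union_right (hβne.mono Finset.subset_union_right)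
    have hvβ : {v} ∪ β ∈ K := by
      refine hK.2 _ hu _ ?_ (hβne.mono Finset.subset_union_right)
      exact Finset.union_subset_union_right Finset.subset_union_right
    refine ⟨⟨hβK, hd.1, hvβ⟩, hd.2, hsβ, ?_, hu⟩
    exact Finset.disjoint_union_right.2 ⟨Finset.disjoint_singleton_left.2 hvs, hd.1⟩

/-- transported ridge condition for links -/
lemma link_ridge_two (hK : IsComplex K) {v : V} {s : Finset V}
    (hs : s ∈ link K {v})
    (h2 : (K.filter fun t => IsFacet K t ∧ ({v} ∪ s) ⊆ t).card = 2) :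
    ((link K {v}).filter fun t => IsFacet (link K {v}) t ∧ s ⊆ t).card = 2 := by
  rw [← h2]
  refine Finset.card_bij' (fun t _ => {v} ∪ t) (fun τ _ => τ \ {v}) ?hi ?hj ?li ?ri
  case hi =>
    intro t ht
    rw [Finset.mem_filter] at ht ⊢
    obtain ⟨htL, htf, hst⟩ := ht
    have h1 := facet_insert_of_link_facet hK htf
    exact ⟨h1.1, h1, Finset.union_subset_union (Finset.Subset.refl _) hst⟩
  case hj =>
    intro τ hτ
    rw [Finset.mem_filter] at hτ ⊢
    obtain ⟨hτK, hτf, hsτ⟩ := hτ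
    have hvτ : v ∈ τ := hsτ (Finset.mem_union_left _ (by simp))
    have hsne : s.Nonempty := hK.1 s (mem_link_iff.1 hs).1
    have hsτ' : s ⊆ τ \ {v} := by
      intro z hz
      refine Finset.mem_sdiff.2 ⟨hsτ (Finset.mem_union_right _ hz), ?_⟩
      simp only [Finset.mem_singleton]
      rintro rfl
      exact (notmem_of_link_mem hs) hz
    have hne : (τ \ {v}).Nonempty := hsne.mono hsτ'
    have hf := link_facet_of_facet hK hτf hvτ hne
    exact ⟨hf.1, hf, hsτ'⟩
  case li =>
    intro t ht
    rw [Finset.mem_filter] at ht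
    exact Finset.union_sdiff_cancel_left (mem_link_iff.1 ht.1).2.1
  case ri =>
    intro τ hτ
    rw [Finset.mem_filter] at hτ
    have hvτ : v ∈ τ := hτ.2.2 (Finset.mem_union_left _ (by simp))
    exact Finset.union_sdiff_of_subset (Finset.singleton_subset_iff.2 hvτ)

lemma link_vertex_normal {d : ℕ} (hd : 2 ≤ d) (hM : IsNormalPM K d) {v : V}
    (hv : v ∈ vertexSet K) : IsNormalPM (link K {v}) (d - 1) := by
  obtain ⟨⟨hKc, hKp, hK2⟩, hKconn, hKlink⟩ := hM
  have hvK : ({v} : Finset V) ∈ K := singleton_mem_of_vertex hKc hv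
  refine ⟨⟨isComplex_link hKc _, link_vertex_pure hKc (by omega) hKp hv, ?_⟩, ?_, ?_⟩
  · intro s hs hcard
    apply link_ridge_two hKc hs
    apply hK2
    · exact (mem_link_iff.1 hs).2.2
    · rw [card_union_singleton (notmem_of_link_mem hs), hcard]
      omega
  · apply hKlink _ hvK
    rw [Finset.card_singleton]; omega
  · intro s hs hcard
    rw [link_link hKc (notmem_of_link_mem hs)]
    apply hKlink
    · exact (mem_link_iff.1 hs).2.2
    · rw [card_union_singleton (notmem_of_link_mem hs)]
      omega

end LinkLemmas



section GraphCore

variable {L : Finset (Finset V)}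

/-- The edge graph of `L` with all vertices in `X` deleted. -/
def avoidG (L : Finset (Finset V)) (X : Finset V) : SimpleGraph V where
  Adj x y := x ≠ y ∧ ({x, y} : Finset V) ∈ L ∧ x ∉ X ∧ y ∉ X
  symm := by
    constructor
    intro x y ⟨h1, h2, h3, h4⟩
    exact ⟨h1.symm, by rwa [Finset.pair_comm], h4, h3⟩
  loopless := ⟨fun x h => h.1 rfl⟩

lemma reach_closed (hconn : CConnected L) {P : V → Prop}
    (hcl : ∀ x, P x → ∀ y, (edgeGraph L).Adj x y → P y) {x₀ : V}
    (hx₀ : x₀ ∈ vertexSet L) (hP₀ : P x₀) {z : V} (hz : z ∈ vertexSet L) : P z := by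
  have hr := hconn.2 x₀ hx₀ z hz
  rw [SimpleGraph.reachable_iff_reflTransGen] at hr
  clear hz
  induction hr with
  | refl => exact hP₀
  | tail _ hadj ih => exact hcl _ ih _ hadj

lemma handshake (S : Finset V) (E : Finset (Finset V))
    (hE : ∀ e ∈ E, e.card = 2 ∧ e ⊆ S) :
    ∑ x ∈ S, (E.filter fun e => x ∈ e).card = 2 * E.card := by
  have h1 : ∀ x ∈ S, (E.filter fun e => x ∈ e).card = ∑ e ∈ E, if x ∈ e then 1 else 0 := by
    intro x _
    rw [Finset.card_filter]
  rw [Finset.sum_congr rfl h1, Finset.sum_comm]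
  have h2 : ∀ e ∈ E, ∑ x ∈ S, (if x ∈ e then 1 else 0) = 2 := by
    intro e he
    rw [← Finset.card_filter]
    have : S.filter (fun x => x ∈ e) = e := by
      ext z
      simp only [Finset.mem_filter]
      exact ⟨fun h => h.2, fun h => ⟨(hE e he).2 h, h⟩⟩
    rw [this, (hE e he).1]
  rw [Finset.sum_congr rfl h2, Finset.sum_const, smul_eq_mul, mul_comm]

lemma two_mem_eq {e : Finset V} {x z : V} (he : e.card = 2) (hx : x ∈ e) (hz : z ∈ e)
    (hne : z ≠ x) : e = {x, z} := by
  symm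
  apply Finset.eq_of_subset_of_card_le
  · intro w hw
    rcases Finset.mem_insert.1 hw with h | h
    · exact h ▸ hx
    · exact (Finset.mem_singleton.1 h) ▸ hz
  · rw [he, Finset.card_insert_of_notMem (by simpa using hne.symm), Finset.card_singleton]

/-- Deleting one vertex from a "cycle" (connected, all degrees two) keeps it connected. -/
lemma cyc_avoid (hLc : IsComplex L) (hconn : CConnected L)
    (hdeg : ∀ x ∈ vertexSet L, (L.filter fun e => e.card = 2 ∧ x ∈ e).card = 2)
    {s p q : V} (hs : s ∈ vertexSet L) (hp : p ∈ vertexSet L) (hq : q ∈ vertexSet L)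
    (hps : p ≠ s) (hqs : q ≠ s) : (avoidG L {s}).Reachable p q := by
  by_contra hreach
  set G := avoidG L {s} with hG
  set T := (vertexSet L).filter (fun z => G.Reachable p z) with hT
  have hqT : q ∉ T := by
    intro h
    exact hreach (Finset.mem_filter.1 h).2
  have hpT : p ∈ T := Finset.mem_filter.2 ⟨hp, SimpleGraph.Reachable.refl p⟩
  have hsT : s ∉ T := by
    intro h
    have hr := (Finset.mem_filter.1 h).2
    rw [SimpleGraph.reachable_iff_reflTransGen] at hr
    rcases Relation.ReflTransGen.cases_tail hr with h' | ⟨c, _, hadj⟩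
    · exact hps h'.symm
    · exact hadj.2.2.2 (by simp)
  have hTV : T ⊆ vertexSet L := Finset.filter_subset _ _
  have hTcl : ∀ x ∈ T, ∀ y, x ≠ y → ({x, y} : Finset V) ∈ L → y ≠ s → y ∈ T := by
    intro x hx y hxy hpair hys
    have hyV : y ∈ vertexSet L := subset_vertexSet hpair (by simp)
    have hxs : x ≠ s := fun h => hsT (h ▸ hx)
    have hadj : G.Adj x y := ⟨hxy, hpair, by simpa using hxs, by simpa using hys⟩
    exact Finset.mem_filter.2 ⟨hyV, ((Finset.mem_filter.1 hx).2).trans hadj.reachable⟩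
  set E' := L.filter (fun e => e.card = 2 ∧ e ⊆ T ∪ {s}) with hE'
  have hdegT : ∀ x ∈ T, (E'.filter fun e => x ∈ e) = L.filter (fun e => e.card = 2 ∧ x ∈ e) := by
    intro x hx
    ext e
    simp only [hE', Finset.mem_filter]
    constructor
    · rintro ⟨⟨heL, hec, _⟩, hxe⟩
      exact ⟨heL, hec, hxe⟩
    · rintro ⟨heL, hec, hxe⟩
      refine ⟨⟨heL, hec, ?_⟩, hxe⟩
      intro z hz
      by_cases hzx : z = x
      · exact Finset.mem_union_left _ (hzx ▸ hx)
      · have hez : e = {x, z} := two_mem_eq hec hxe hz hzx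
        by_cases hzs : z = s
        · exact Finset.mem_union_right _ (by simp [hzs])
        · exact Finset.mem_union_left _
            (hTcl x hx z (fun h => hzx h.symm) (hez ▸ heL) hzs)
  have hsum := handshake (T ∪ {s}) E' (by
    intro e he
    exact ⟨(Finset.mem_filter.1 he).2.1, (Finset.mem_filter.1 he).2.2⟩)
  have hTs : T ∪ {s} = insert s T := by
    rw [Finset.union_comm, ← Finset.insert_eq]
  rw [hTs, Finset.sum_insert hsT] at hsum
  have hdeg2 : ∀ x ∈ T, (E'.filter fun e => x ∈ e).card = 2 := by
    intro x hx
    rw [hdegT x hx]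
    exact hdeg x (hTV hx)
  rw [Finset.sum_congr rfl hdeg2, Finset.sum_const, smul_eq_mul, mul_comm] at hsum
  -- hsum : deg_{E'} s + 2 * T.card = 2 * E'.card
  have hsub : E'.filter (fun e => s ∈ e) ⊆ L.filter (fun e => e.card = 2 ∧ s ∈ e) := by
    intro e he
    simp only [hE', Finset.mem_filter] at he ⊢
    exact ⟨he.1.1, he.1.2.1, he.2⟩
  have hle2 : (E'.filter fun e => s ∈ e).card ≤ 2 := by
    rw [← hdeg s hs]
    exact Finset.card_le_card hsub
  have heven : (E'.filter fun e => s ∈ e).card = 0 ∨ (E'.filter fun e => s ∈ e).card = 2 := by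
    omega
  rcases heven with h0 | h2
  · -- T itself is closed
    have hcl : ∀ x, x ∈ T → ∀ y, (edgeGraph L).Adj x y → y ∈ T := by
      intro x hx y hadj
      by_cases hys : y = s
      · exfalso
        have hpair : ({x, y} : Finset V) ∈ L := hadj.2
        have hmem : ({x, y} : Finset V) ∈ E'.filter (fun e => s ∈ e) := by
          simp only [hE', Finset.mem_filter]
          refine ⟨⟨hpair, Finset.card_pair hadj.1, ?_⟩, by simp [hys]⟩
          intro z hz
          rcases Finset.mem_insert.1 hz with h | h
          · exact Finset.mem_union_left _ (h ▸ hx)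
          · rw [Finset.mem_singleton.1 h, hys]
            exact Finset.mem_union_right _ (by simp)
        rw [Finset.card_eq_zero] at h0
        rw [h0] at hmem
        exact absurd hmem (Finset.notMem_empty _)
      · exact hTcl x hx y hadj.1 hadj.2 hys
    have := reach_closed hconn hcl (hTV hpT) hpT hs
    exact hsT this
  · -- T ∪ {s} is closed
    have hEeq : E'.filter (fun e => s ∈ e) = L.filter (fun e => e.card = 2 ∧ s ∈ e) :=
      Finset.eq_of_subset_of_card_le hsub (by rw [hdeg s hs, h2])
    have hcl : ∀ x, x ∈ T ∪ {s} → ∀ y, (edgeGraph L).Adj x y → y ∈ T ∪ {s} := by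
      intro x hx y hadj
      rcases Finset.mem_union.1 hx with hxT | hxs
      · by_cases hys : y = s
        · exact Finset.mem_union_right _ (by simp [hys])
        · exact Finset.mem_union_left _ (hTcl x hxT y hadj.1 hadj.2 hys)
      · have hxs' : x = s := by simpa using hxs
        have hpair : ({x, y} : Finset V) ∈ L := hadj.2
        have hmem : ({x, y} : Finset V) ∈ L.filter (fun e => e.card = 2 ∧ s ∈ e) := by
          refine Finset.mem_filter.2 ⟨hpair, Finset.card_pair hadj.1, by simp [← hxs']⟩
        rw [← hEeq] at hmem
        have hsubTs : ({x, y} : Finset V) ⊆ T ∪ {s} :=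
          (Finset.mem_filter.1 (Finset.mem_filter.1 hmem).1).2.2
        exact hsubTs (by simp)
    have := reach_closed hconn hcl (hTV hpT) (Finset.mem_union_left _ hpT) hq
    rcases Finset.mem_union.1 this with h | h
    · exact hqT h
    · exact hqs (by simpa using h)

/-- walking to `s` in the graph avoiding `s'`, the last stop before first reaching `s`
is a neighbour of `s` reachable while avoiding both `s` and `s'`. -/
lemma first_hit {s s' x : V} (h : (avoidG L {s'}).Reachable x s) (hx : x ≠ s) :
    ∃ y, y ≠ s' ∧ y ≠ s ∧ ({y, s} : Finset V) ∈ L ∧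
      (avoidG L {s, s'}).Reachable x y := by
  rw [SimpleGraph.reachable_iff_reflTransGen] at h
  revert hx
  induction h using Relation.ReflTransGen.head_induction_on with
  | refl => intro hxs; exact absurd rfl hxs
  | head hadj htail ih =>
    rename_i a c
    intro hx
    by_cases hc : c = s
    · subst hc
      refine ⟨a, by simpa using hadj.2.2.1, hx, hadj.2.1, SimpleGraph.Reachable.refl a⟩
    · obtain ⟨y, hy1, hy2, hy3, hy4⟩ := ih hc
      refine ⟨y, hy1, hy2, hy3, ?_⟩
      have hadj' : (avoidG L {s, s'}).Adj a c := by
        refine ⟨hadj.1, hadj.2.1, ?_, ?_⟩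
        · simp only [Finset.mem_insert, Finset.mem_singleton]
          push_neg
          exact ⟨hx, by simpa using hadj.2.2.1⟩
        · simp only [Finset.mem_insert, Finset.mem_singleton]
          push_neg
          exact ⟨hc, by simpa using hadj.2.2.2⟩
      exact hadj'.reachable.trans hy4

end GraphCore


section StrongConn

variable {K M : Finset (Finset V)}

lemma chain_of_shared (hKc : IsComplex K) (hconn : CConnected K)
    {R : Finset V → Finset V → Prop}
    (hshared : ∀ x σ σ', IsFacet K σ → IsFacet K σ' → x ∈ σ → x ∈ σ' →
      Relation.ReflTransGen R σ σ') :
    ∀ σ σ', IsFacet K σ → IsFacet K σ' → Relation.ReflTransGen R σ σ' := by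
  intro σ σ' hσ hσ'
  obtain ⟨p, hp⟩ := hKc.1 σ hσ.1
  obtain ⟨q, hq⟩ := hKc.1 σ' hσ'.1
  have hr := hconn.2 p (subset_vertexSet hσ.1 hp) q (subset_vertexSet hσ'.1 hq)
  rw [SimpleGraph.reachable_iff_reflTransGen] at hr
  revert σ
  induction hr using Relation.ReflTransGen.head_induction_on with
  | refl =>
    intro σ hσ hqσ
    exact hshared q σ σ' hσ hσ' hqσ hq
  | head hadj htail ih =>
    rename_i a c
    intro σ hσ haσ
    obtain ⟨τ, hτ, hsub⟩ := exists_facet hadj.2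
    have h1 := hshared a σ τ hσ hτ haσ (hsub (by simp))
    have h2 := ih τ hτ (hsub (by simp))
    exact h1.trans h2

lemma facet_chain_conn :
    ∀ (e : ℕ) (K : Finset (Finset V)), IsComplex K →
      (∀ t, IsFacet K t → t.card = e + 1) →
      CConnected K → (∀ s ∈ K, s.card ≤ e - 1 → CConnected (link K s)) →
      ∀ σ σ', IsFacet K σ → IsFacet K σ' →
      Relation.ReflTransGen
        (fun τ τ' => IsFacet K τ ∧ IsFacet K τ' ∧ (τ ∩ τ').card = e) σ σ' := by
  intro e
  induction e with
  | zero =>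
    intro K hKc hfc hconn _hlink σ σ' hσ hσ'
    apply chain_of_shared hKc hconn (R := fun τ τ' => IsFacet K τ ∧ IsFacet K τ' ∧ (τ ∩ τ').card = 0)
      ?_ σ σ' hσ hσ'
    intro x τ τ' hτ hτ' hxτ hxτ'
    obtain ⟨a, ha⟩ := Finset.card_eq_one.1 (hfc τ hτ)
    obtain ⟨b, hb⟩ := Finset.card_eq_one.1 (hfc τ' hτ')
    have : τ = τ' := by
      rw [ha, hb]
      rw [ha, Finset.mem_singleton] at hxτ
      rw [hb, Finset.mem_singleton] at hxτ'
      rw [← hxτ, ← hxτ']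
    exact this ▸ Relation.ReflTransGen.refl
  | succ e ih =>
    intro K hKc hfc hconn hlink σ σ' hσ hσ'
    apply chain_of_shared hKc hconn ?_ σ σ' hσ hσ'
    intro x τ τ' hτ hτ' hxτ hxτ'
    by_cases heq : τ = τ'
    · exact heq ▸ Relation.ReflTransGen.refl
    rcases Nat.eq_zero_or_pos e with he0 | hepos
    · -- dimension 1 : facets are edges sharing a vertex
      subst he0
      refine Relation.ReflTransGen.single ⟨hτ, hτ', ?_⟩
      have hle' : (τ ∩ τ').card ≤ τ.card := Finset.card_le_card Finset.inter_subset_left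
      rw [hfc τ hτ] at hle'
      have hge : 1 ≤ (τ ∩ τ').card :=
        Finset.card_pos.2 ⟨x, Finset.mem_inter.2 ⟨hxτ, hxτ'⟩⟩
      have hne2 : (τ ∩ τ').card ≠ 2 := by
        intro h
        have : τ ∩ τ' = τ :=
          Finset.eq_of_subset_of_card_le Finset.inter_subset_left (by rw [hfc τ hτ, h])
        exact heq (hτ.2 τ' hτ'.1 (by rw [← this]; exact Finset.inter_subset_right))
      omega
    · -- recurse into the link of x
      have hxV : x ∈ vertexSet K := subset_vertexSet hτ.1 hxτ
      have hxK : ({x} : Finset V) ∈ K := singleton_mem_of_vertex hKc hxV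
      set K' := link K {x} with hK'
      have hK'c : IsComplex K' := isComplex_link hKc _
      have hfc' : ∀ t, IsFacet K' t → t.card = e + 1 := by
        intro t ht
        have h1 := facet_insert_of_link_facet hKc ht
        have := hfc _ h1
        rw [card_union_singleton (notmem_of_link_mem ht.1)] at this
        omega
      have hconn' : CConnected K' := by
        apply hlink _ hxK
        rw [Finset.card_singleton]
        omega
      have hlink' : ∀ s ∈ K', s.card ≤ e - 1 → CConnected (link K' s) := by
        intro s hs hcard
        rw [hK', link_link hKc (notmem_of_link_mem hs)]
        apply hlink _ (mem_link_iff.1 hs).2.2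
        rw [card_union_singleton (notmem_of_link_mem hs)]
        omega
      have hτne : (τ \ {x}).Nonempty := by
        rw [← Finset.card_pos, card_sdiff_singleton hxτ, hfc τ hτ]
        omega
      have hτ'ne : (τ' \ {x}).Nonempty := by
        rw [← Finset.card_pos, card_sdiff_singleton hxτ', hfc τ' hτ']
        omega
      have hf1 := link_facet_of_facet hKc hτ hxτ hτne
      have hf2 := link_facet_of_facet hKc hτ' hxτ' hτ'ne
      have hchain := ih K' hK'c hfc' hconn' hlink' _ _ hf1 hf2
      have hstep : ∀ a b : Finset V, (IsFacet K' a ∧ IsFacet K' b ∧ (a ∩ b).card = e) →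
          (IsFacet K ({x} ∪ a) ∧ IsFacet K ({x} ∪ b) ∧ (({x} ∪ a) ∩ ({x} ∪ b)).card = e + 1) := by
        rintro a b ⟨ha, hb, hab⟩
        refine ⟨facet_insert_of_link_facet hKc ha, facet_insert_of_link_facet hKc hb, ?_⟩
        have hxa : x ∉ a := notmem_of_link_mem ha.1
        have hdistrib : ({x} ∪ a) ∩ ({x} ∪ b) = {x} ∪ (a ∩ b) :=
          (Finset.union_inter_distrib_left {x} a b).symm
        rw [hdistrib, card_union_singleton (fun h => hxa (Finset.mem_inter.1 h).1), hab]
      have hlift := Relation.ReflTransGen.lift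
        (p := fun τ τ' => IsFacet K τ ∧ IsFacet K τ' ∧ (τ ∩ τ').card = e + 1)
        (fun t => ({x} ∪ t : Finset V)) hstep _ _ hchain
      simpa only [Function.onFun, Finset.union_sdiff_of_subset (Finset.singleton_subset_iff.2 hxτ),
        Finset.union_sdiff_of_subset (Finset.singleton_subset_iff.2 hxτ')] using hlift

lemma ridge_two_ext {ρ : Finset V} {d : ℕ}
    (h2 : (M.filter fun t => IsFacet M t ∧ ρ ⊆ t).card = 2)
    (hfc : ∀ t, IsFacet M t → t.card = d + 1) (hρ : ρ.card = d) :
    ∃ u v, u ≠ v ∧ u ∉ ρ ∧ v ∉ ρ ∧ IsFacet M (ρ ∪ {u}) ∧ IsFacet M (ρ ∪ {v}) ∧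
      ∀ τ, IsFacet M τ → ρ ⊆ τ → τ = ρ ∪ {u} ∨ τ = ρ ∪ {v} := by
  obtain ⟨τ₁, τ₂, hτne, hfs⟩ := Finset.card_eq_two.1 h2
  have hτ₁ : τ₁ ∈ M.filter fun t => IsFacet M t ∧ ρ ⊆ t := by rw [hfs]; simp
  have hτ₂ : τ₂ ∈ M.filter fun t => IsFacet M t ∧ ρ ⊆ t := by rw [hfs]; simp
  rw [Finset.mem_filter] at hτ₁ hτ₂
  obtain ⟨u, hu⟩ : ∃ u, τ₁ \ ρ = {u} := by
    apply Finset.card_eq_one.1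
    rw [Finset.card_sdiff_of_subset hτ₁.2.2, hfc _ hτ₁.2.1, hρ]
    omega
  obtain ⟨v, hv⟩ : ∃ v, τ₂ \ ρ = {v} := by
    apply Finset.card_eq_one.1
    rw [Finset.card_sdiff_of_subset hτ₂.2.2, hfc _ hτ₂.2.1, hρ]
    omega
  have he1 : ρ ∪ {u} = τ₁ := by rw [← hu, Finset.union_sdiff_of_subset hτ₁.2.2]
  have he2 : ρ ∪ {v} = τ₂ := by rw [← hv, Finset.union_sdiff_of_subset hτ₂.2.2]
  have huρ : u ∉ ρ := by
    have : u ∈ τ₁ \ ρ := by rw [hu]; simp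
    exact (Finset.mem_sdiff.1 this).2
  have hvρ : v ∉ ρ := by
    have : v ∈ τ₂ \ ρ := by rw [hv]; simp
    exact (Finset.mem_sdiff.1 this).2
  refine ⟨u, v, ?_, huρ, hvρ, he1 ▸ hτ₁.2.1, he2 ▸ hτ₂.2.1, ?_⟩
  · intro h
    exact hτne (by rw [← he1, ← he2, h])
  · intro τ hτf hρτ
    have : τ ∈ M.filter fun t => IsFacet M t ∧ ρ ⊆ t :=
      Finset.mem_filter.2 ⟨hτf.1, hτf, hρτ⟩
    rw [hfs] at this
    rcases Finset.mem_insert.1 this with h | h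
    · left; rw [h, he1]
    · right; rw [Finset.mem_singleton.1 h, he2]

end StrongConn


section KeyMove

variable {M : Finset (Finset V)} {A : Finset V} {d : ℕ}

lemma eq_of_union_singleton {σ : Finset V} {x z : V} (hx : x ∉ σ)
    (h : σ ∪ {x} = σ ∪ {z}) : x = z := by
  have hm : x ∈ σ ∪ {z} := h ▸ (Finset.mem_union_right _ (Finset.mem_singleton_self x))
  rcases Finset.mem_union.1 hm with h' | h'
  · exact absurd h' hx
  · exact Finset.mem_singleton.1 h'

lemma mem_simpComplement_iff {s : Finset V} :
    s ∈ simpComplement M A ↔ s ∈ M ∧ s ⊆ vertexSet M \ A := Finset.mem_filter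

lemma cEdge {x y : V} (hxy : x ≠ y) (hp : ({x, y} : Finset V) ∈ M)
    (hx : x ∉ A) (hy : y ∉ A) : (edgeGraph (simpComplement M A)).Adj x y := by
  refine ⟨hxy, mem_simpComplement_iff.2 ⟨hp, ?_⟩⟩
  intro z hz
  rcases Finset.mem_insert.1 hz with h | h
  · subst h
    exact Finset.mem_sdiff.2 ⟨subset_vertexSet hp (by simp), hx⟩
  · rw [Finset.mem_singleton.1 h]
    exact Finset.mem_sdiff.2 ⟨subset_vertexSet hp (by simp), hy⟩

lemma key_move
    (hd : 1 ≤ d)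
    (hMc : IsComplex M) (hMfc : ∀ t, IsFacet M t → t.card = d + 1)
    (hM2 : ∀ s ∈ M, s.card = d → (M.filter fun t => IsFacet M t ∧ s ⊆ t).card = 2)
    (hMconn : CConnected M)
    (hMlink : ∀ s ∈ M, s.card ≤ d - 1 → CConnected (link M s))
    (hNfc : ∀ t, IsFacet (induced M A) t → t.card = d)
    {γ : Finset V} (hγA : γ ⊆ A) (hγc : γ.card = d - 1) (hγM : γ = ∅ ∨ γ ∈ M)
    {s s' : V} (hss' : s ≠ s') (hsA : s ∈ A) (hs'A : s' ∈ A)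
    (hsγ : s ∉ γ) (hs'γ : s' ∉ γ)
    (hfs : γ ∪ {s} ∈ M) (hfs' : γ ∪ {s'} ∈ M)
    (hexact : ∀ x, x ∈ A → x ∉ γ → γ ∪ {x} ∈ M → x = s ∨ x = s') :
    ∀ x, IsFacet M (γ ∪ {s'} ∪ {x}) → x ∉ A →
      ∃ y, IsFacet M (γ ∪ {s} ∪ {y}) ∧ y ∉ A ∧
        (edgeGraph (simpComplement M A)).Reachable x y := by
  intro x hxf hxA
  set L := link M γ with hL
  have hLc : IsComplex L := isComplex_link hMc γ
  have hLM : L ⊆ M := link_subset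
  have hvertL : ∀ z : V, z ∈ vertexSet L ↔ (z ∉ γ ∧ γ ∪ {z} ∈ M) := by
    intro z
    constructor
    · intro hz
      have hzL : ({z} : Finset V) ∈ L := singleton_mem_of_vertex hLc hz
      rcases mem_link_iff.1 hzL with ⟨_, hdisj, hun⟩
      exact ⟨fun h => (Finset.disjoint_right.1 hdisj (by simp)) h, hun⟩
    · rintro ⟨hzγ, hzM⟩
      have hzL : ({z} : Finset V) ∈ L := by
        refine mem_link_iff.2 ⟨?_, ?_, hzM⟩
        · exact hMc.2 _ hzM _ Finset.subset_union_right ⟨z, by simp⟩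
        · exact Finset.disjoint_singleton_right.2 hzγ
      exact subset_vertexSet hzL (by simp)
  have hcard_ext : ∀ z : V, z ∉ γ → (γ ∪ {z}).card = d := by
    intro z hz
    rw [Finset.union_comm, ← Finset.insert_eq, Finset.card_insert_of_notMem hz, hγc]
    omega
  have hconnL : CConnected L := by
    rcases hγM with h | h
    · rw [hL, h, link_empty hMc]
      exact hMconn
    · exact hMlink γ h (by omega)
  have hdeg : ∀ z ∈ vertexSet L, (L.filter fun e => e.card = 2 ∧ z ∈ e).card = 2 := by
    intro z hz
    rcases (hvertL z).1 hz with ⟨hzγ, hzM⟩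
    have hbij : (L.filter fun e => e.card = 2 ∧ z ∈ e).card =
        (M.filter fun t => IsFacet M t ∧ γ ∪ {z} ⊆ t).card := by
      refine Finset.card_bij' (fun e _ => γ ∪ e) (fun τ _ => τ \ γ) ?_ ?_ ?_ ?_
      · intro e he
        rw [Finset.mem_filter] at he ⊢
        obtain ⟨heL, hec, hze⟩ := he
        rcases mem_link_iff.1 heL with ⟨heM, hdisj, hun⟩
        refine ⟨hun, facet_of_card_eq_facetcard (d := d + 1) (fun t ht => hMfc t ht) hun ?_, ?_⟩
        · rw [Finset.card_union_of_disjoint hdisj, hγc, hec]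
          omega
        · refine Finset.union_subset (Finset.subset_union_left) ?_
          exact Finset.singleton_subset_iff.2 (Finset.mem_union_right _ hze)
      · intro τ hτ
        rw [Finset.mem_filter] at hτ ⊢
        obtain ⟨hτM, hτf, hsub⟩ := hτ
        have hγτ : γ ⊆ τ := Finset.subset_union_left.trans hsub
        refine ⟨?_, ?_, ?_⟩
        · refine mem_link_iff.2 ⟨?_, Finset.disjoint_sdiff, ?_⟩
          · refine hMc.2 _ hτM _ Finset.sdiff_subset ?_
            refine ⟨z, Finset.mem_sdiff.2 ⟨hsub (Finset.mem_union_right _ (by simp)), hzγ⟩⟩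
          · rwa [Finset.union_sdiff_of_subset hγτ]
        · rw [Finset.card_sdiff_of_subset hγτ, hMfc τ hτf, hγc]
          omega
        · exact Finset.mem_sdiff.2 ⟨hsub (Finset.mem_union_right _ (by simp)), hzγ⟩
      · intro e he
        rw [Finset.mem_filter] at he
        exact Finset.union_sdiff_cancel_left (mem_link_iff.1 he.1).2.1
      · intro τ hτ
        rw [Finset.mem_filter] at hτ
        exact Finset.union_sdiff_of_subset (Finset.subset_union_left.trans hτ.2.2)
    rw [hbij]
    exact hM2 _ hzM (hcard_ext z hzγ)
  have hAvert : ∀ z ∈ vertexSet L, z ∈ A → z = s ∨ z = s' := by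
    intro z hz hzA
    rcases (hvertL z).1 hz with ⟨hzγ, hzM⟩
    exact hexact z hzA hzγ hzM
  have hsV : s ∈ vertexSet L := (hvertL s).2 ⟨hsγ, hfs⟩
  have hs'V : s' ∈ vertexSet L := (hvertL s').2 ⟨hs'γ, hfs'⟩
  have hxfM : γ ∪ {s'} ∪ {x} ∈ M := hxf.1
  have hxs : x ≠ s := fun h => hxA (h ▸ hsA)
  have hxs' : x ≠ s' := fun h => hxA (h ▸ hs'A)
  have hxγ : x ∉ γ := fun h => hxA (hγA h)
  have hxL : ({s', x} : Finset V) ∈ L := by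
    refine mem_link_iff.2 ⟨?_, ?_, ?_⟩
    · have hsub : ({s', x} : Finset V) ⊆ γ ∪ {s'} ∪ {x} := by
        intro z hz
        rcases Finset.mem_insert.1 hz with h | h
        · exact Finset.mem_union_left _ (Finset.mem_union_right _ (by simp [h]))
        · exact Finset.mem_union_right _ h
      exact hMc.2 _ hxfM _ hsub ⟨s', by simp⟩
    · rw [Finset.disjoint_right]
      intro z hz
      rcases Finset.mem_insert.1 hz with h | h
      · exact h ▸ hs'γ
      · exact (Finset.mem_singleton.1 h) ▸ hxγ
    · have heq3 : γ ∪ {s', x} = γ ∪ {s'} ∪ {x} := by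
        rw [Finset.union_assoc]
        congr 1
      rw [heq3]
      exact hxfM
  have hxV : x ∈ vertexSet L := subset_vertexSet hxL (by simp)
  -- reach `s` inside `L` avoiding `s'`
  have hreach : (avoidG L {s'}).Reachable x s :=
    cyc_avoid hLc hconnL hdeg hs'V hxV hsV hxs' hss'
  obtain ⟨y, hys', hys, hyL, hyreach⟩ := first_hit hreach hxs
  have hyV : y ∈ vertexSet L := subset_vertexSet hyL (by simp)
  have hyA : y ∉ A := by
    intro h
    rcases hAvert y hyV h with h' | h'
    · exact hys h'
    · exact hys' h'
  have hyγ : y ∉ γ := fun h => hyA (hγA h)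
  have hyfM : γ ∪ {s} ∪ {y} ∈ M := by
    have h1 : γ ∪ {y, s} ∈ M := (mem_link_iff.1 hyL).2.2
    have heq2 : γ ∪ {y, s} = γ ∪ {s} ∪ {y} := by
      rw [Finset.union_assoc]
      congr 1
      rw [← Finset.insert_eq]
      exact Finset.pair_comm y s
    rwa [heq2] at h1
  have hyf : IsFacet M (γ ∪ {s} ∪ {y}) := by
    refine facet_of_card_eq_facetcard (d := d + 1) (fun t ht => hMfc t ht) hyfM ?_
    have hdisj2 : Disjoint γ ({s} ∪ {y} : Finset V) := by
      rw [Finset.disjoint_right]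
      intro z hz
      rcases Finset.mem_union.1 hz with h | h
      · exact (Finset.mem_singleton.1 h) ▸ hsγ
      · exact (Finset.mem_singleton.1 h) ▸ hyγ
    have hc2 : ({s} ∪ {y} : Finset V).card = 2 := by
      rw [← Finset.insert_eq]
      exact Finset.card_pair (Ne.symm hys)
    rw [Finset.union_assoc, Finset.card_union_of_disjoint hdisj2, hγc, hc2]
    omega
  refine ⟨y, hyf, hyA, ?_⟩
  refine SimpleGraph.Reachable.mono ?_ hyreach
  intro p q hpq
  obtain ⟨hpq1, hpq2, hpq3, hpq4⟩ := hpq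
  have hpV : p ∈ vertexSet L := subset_vertexSet hpq2 (by simp)
  have hqV : q ∈ vertexSet L := subset_vertexSet hpq2 (by simp)
  have hpA : p ∉ A := by
    intro h
    rcases hAvert p hpV h with h' | h' <;> simp [h'] at hpq3
  have hqA : q ∉ A := by
    intro h
    rcases hAvert q hqV h with h' | h' <;> simp [h'] at hpq4
  exact cEdge hpq1 (hLM hpq2) hpA hqA

end KeyMove


section MainThm

lemma main_thm :
    ∀ d : ℕ, 1 ≤ d → ∀ (M : Finset (Finset V)) (A : Finset V),
      IsNormalPM M d → A ⊆ vertexSet M →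
      (∀ t, IsFacet (induced M A) t → t.card = d) →
      (∀ s ∈ induced M A, s.card = d - 1 →
        ((induced M A).filter fun t => IsFacet (induced M A) t ∧ s ⊆ t).card = 2) →
      (CConnected (induced M A) ∨ (d = 1 ∧ A.card = 2)) →
      (∀ s ∈ induced M A, s.card ≤ d - 2 → CConnected (link (induced M A) s)) →
      ∀ σ u v, IsFacet (induced M A) σ → u ∉ A → v ∉ A → u ≠ v →
        IsFacet M (σ ∪ {u}) → IsFacet M (σ ∪ {v}) →
        ∀ w ∈ vertexSet (simpComplement M A),
          (edgeGraph (simpComplement M A)).Reachable w u ∨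
          (edgeGraph (simpComplement M A)).Reachable w v := by
  intro d
  induction d using Nat.strong_induction_on with
  | _ d IH =>
  intro hd M A hM hA hNfc hN2 hNconn hNlink σ u v hσ huA hvA huv hfu hfv w hw
  have hMc : IsComplex M := hM.1.1
  have hMfc : ∀ t, IsFacet M t → t.card = d + 1 := hM.1.2.1.2
  have hM2 := hM.1.2.2
  have hMconn : CConnected M := hM.2.1
  have hMlink := hM.2.2
  have hNc : IsComplex (induced M A) := isComplex_induced hMc A
  have hsubA : ∀ s ∈ induced M A, s ⊆ A := fun s hs => (mem_induced_iff.1 hs).2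
  have hfacetA : ∀ τ, IsFacet M τ → ¬ τ ⊆ A := by
    intro τ hτ hss
    have hτN : τ ∈ induced M A := mem_induced_iff.2 ⟨hτ.1, hss⟩
    obtain ⟨τ', hτ', hsub⟩ := exists_facet hτN
    have h1 := hNfc τ' hτ'
    have h2 := hMfc τ hτ
    have h3 := Finset.card_le_card hsub
    omega
  have hside : ∀ σ' x, σ' ∈ induced M A → IsFacet M (σ' ∪ {x}) → x ∉ A := by
    intro σ' x hσ'N hf hxA
    apply hfacetA _ hf
    exact Finset.union_subset (hsubA σ' hσ'N) (Finset.singleton_subset_iff.2 hxA)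
  -- the two sides of the fixed facet σ
  have hσN := hσ.1
  have hσM : σ ∈ M := induced_subset hσN
  have hσcard : σ.card = d := hNfc σ hσ
  have hσA : σ ⊆ A := hsubA σ hσN
  have huσ : u ∉ σ := fun h => huA (hσA h)
  have hvσ : v ∉ σ := fun h => hvA (hσA h)
  have hPσ : ∀ x, IsFacet M (σ ∪ {x}) →
      (edgeGraph (simpComplement M A)).Reachable x u ∨
      (edgeGraph (simpComplement M A)).Reachable x v := by
    obtain ⟨u', v', hne', hu'σ, hv'σ, hfu', hfv', huniq⟩ :=
      ridge_two_ext (hM2 σ hσM hσcard) hMfc hσcard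
    intro x hfx
    have hxA : x ∉ A := hside σ x hσN hfx
    have hxσ : x ∉ σ := fun h => hxA (hσA h)
    have f1 : u = u' ∨ u = v' := by
      rcases huniq _ hfu Finset.subset_union_left with h | h
      · exact Or.inl (eq_of_union_singleton huσ h)
      · exact Or.inr (eq_of_union_singleton huσ h)
    have f2 : v = u' ∨ v = v' := by
      rcases huniq _ hfv Finset.subset_union_left with h | h
      · exact Or.inl (eq_of_union_singleton hvσ h)
      · exact Or.inr (eq_of_union_singleton hvσ h)
    have f3 : x = u' ∨ x = v' := by
      rcases huniq _ hfx Finset.subset_union_left with h | h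
      · exact Or.inl (eq_of_union_singleton hxσ h)
      · exact Or.inr (eq_of_union_singleton hxσ h)
    have hxuv : x = u ∨ x = v := by
      rcases f1 with h1 | h1 <;> rcases f2 with h2 | h2 <;> rcases f3 with h3 | h3 <;>
        first
          | (exact absurd (h1.trans h2.symm) huv)
          | (left; rw [h3, ← h1])
          | (right; rw [h3, ← h2])
    rcases hxuv with h | h
    · subst h; exact Or.inl (SimpleGraph.Reachable.refl x)
    · subst h; exact Or.inr (SimpleGraph.Reachable.refl x)
  -- propagation between adjacent facets of N
  have hprop : ∀ σ₁ σ₂, IsFacet (induced M A) σ₁ → IsFacet (induced M A) σ₂ →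
      (((σ₁ ∩ σ₂).card = d - 1 ∧ 2 ≤ d) ∨ d = 1) →
      (∀ x, IsFacet M (σ₁ ∪ {x}) →
        (edgeGraph (simpComplement M A)).Reachable x u ∨
        (edgeGraph (simpComplement M A)).Reachable x v) →
      (∀ x, IsFacet M (σ₂ ∪ {x}) →
        (edgeGraph (simpComplement M A)).Reachable x u ∨
        (edgeGraph (simpComplement M A)).Reachable x v) := by
    intro σ₁ σ₂ h₁ h₂ hlk hP1
    by_cases heq : σ₁ = σ₂
    · exact heq ▸ hP1
    have h₁A : σ₁ ⊆ A := hsubA _ h₁.1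
    have h₂A : σ₂ ⊆ A := hsubA _ h₂.1
    have h₁M : σ₁ ∈ M := induced_subset h₁.1
    have h₂M : σ₂ ∈ M := induced_subset h₂.1
    have h₁c : σ₁.card = d := hNfc _ h₁
    have h₂c : σ₂.card = d := hNfc _ h₂
    obtain ⟨γ, hγA, hγc, hγM, s, s', hss', hsA, hs'A, hsγ, hs'γ, hσ₁e, hσ₂e, hexact⟩ :
        ∃ γ, γ ⊆ A ∧ γ.card = d - 1 ∧ (γ = ∅ ∨ γ ∈ M) ∧
          ∃ s s', s ≠ s' ∧ s ∈ A ∧ s' ∈ A ∧ s ∉ γ ∧ s' ∉ γ ∧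
            σ₁ = γ ∪ {s} ∧ σ₂ = γ ∪ {s'} ∧
            (∀ x, x ∈ A → x ∉ γ → γ ∪ {x} ∈ M → x = s ∨ x = s') := by
      rcases hlk with ⟨hcard, hd2⟩ | hd1
      · -- d ≥ 2 : γ = σ₁ ∩ σ₂
        have hγA' : σ₁ ∩ σ₂ ⊆ A := fun z hz => h₁A (Finset.mem_inter.1 hz).1
        have hγM' : σ₁ ∩ σ₂ ∈ M := by
          refine hMc.2 _ h₁M _ Finset.inter_subset_left ?_
          rw [← Finset.card_pos, hcard]; omega
        have hγN : σ₁ ∩ σ₂ ∈ induced M A := mem_induced_iff.2 ⟨hγM', hγA'⟩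
        obtain ⟨s, hs⟩ : ∃ s, σ₁ \ (σ₁ ∩ σ₂) = {s} := by
          apply Finset.card_eq_one.1
          rw [Finset.card_sdiff_of_subset Finset.inter_subset_left, h₁c, hcard]
          omega
        obtain ⟨s', hs'⟩ : ∃ s', σ₂ \ (σ₁ ∩ σ₂) = {s'} := by
          apply Finset.card_eq_one.1
          rw [Finset.card_sdiff_of_subset Finset.inter_subset_right, h₂c, hcard]
          omega
        have hσ₁e : σ₁ = (σ₁ ∩ σ₂) ∪ {s} := by
          rw [← hs, Finset.union_sdiff_of_subset Finset.inter_subset_left]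
        have hσ₂e : σ₂ = (σ₁ ∩ σ₂) ∪ {s'} := by
          rw [← hs', Finset.union_sdiff_of_subset Finset.inter_subset_right]
        have hsm : s ∈ σ₁ \ (σ₁ ∩ σ₂) := by rw [hs]; simp
        have hs'm : s' ∈ σ₂ \ (σ₁ ∩ σ₂) := by rw [hs']; simp
        have hsγ' : s ∉ σ₁ ∩ σ₂ := (Finset.mem_sdiff.1 hsm).2
        have hs'γ' : s' ∉ σ₁ ∩ σ₂ := (Finset.mem_sdiff.1 hs'm).2
        have hss' : s ≠ s' := by
          intro h
          subst h
          exact heq (hσ₁e.trans hσ₂e.symm)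
        have hpairsub : ({σ₁, σ₂} : Finset (Finset V)) ⊆
            (induced M A).filter fun t => IsFacet (induced M A) t ∧ (σ₁ ∩ σ₂) ⊆ t := by
          intro t ht
          rcases Finset.mem_insert.1 ht with h | h
          · subst h; exact Finset.mem_filter.2 ⟨h₁.1, h₁, Finset.inter_subset_left⟩
          · rw [Finset.mem_singleton.1 h]
            exact Finset.mem_filter.2 ⟨h₂.1, h₂, Finset.inter_subset_right⟩
        have hfilter : ({σ₁, σ₂} : Finset (Finset V)) =
            (induced M A).filter fun t => IsFacet (induced M A) t ∧ (σ₁ ∩ σ₂) ⊆ t := by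
          apply Finset.eq_of_subset_of_card_le hpairsub
          rw [hN2 _ hγN hcard, Finset.card_pair heq]
        refine ⟨σ₁ ∩ σ₂, hγA', hcard, Or.inr hγM', s, s', hss',
          h₁A (Finset.mem_sdiff.1 hsm).1, h₂A (Finset.mem_sdiff.1 hs'm).1,
          hsγ', hs'γ', hσ₁e, hσ₂e, ?_⟩
        intro z hzA hzγ hzM'
        have hzN : (σ₁ ∩ σ₂) ∪ {z} ∈ induced M A :=
          mem_induced_iff.2 ⟨hzM', Finset.union_subset hγA' (Finset.singleton_subset_iff.2 hzA)⟩
        have hzc : ((σ₁ ∩ σ₂) ∪ {z}).card = d := by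
          rw [Finset.union_comm, ← Finset.insert_eq, Finset.card_insert_of_notMem hzγ, hcard]
          omega
        have hzf : IsFacet (induced M A) ((σ₁ ∩ σ₂) ∪ {z}) :=
          facet_of_card_eq_facetcard hNfc hzN hzc
        have : (σ₁ ∩ σ₂) ∪ {z} ∈ ({σ₁, σ₂} : Finset (Finset V)) := by
          rw [hfilter]
          exact Finset.mem_filter.2 ⟨hzN, hzf, Finset.subset_union_left⟩
        rcases Finset.mem_insert.1 this with h | h
        · exact Or.inl (eq_of_union_singleton hzγ (h.trans hσ₁e))
        · exact Or.inr (eq_of_union_singleton hzγ ((Finset.mem_singleton.1 h).trans hσ₂e))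
      · -- d = 1
        obtain ⟨s, hs⟩ : ∃ s, σ₁ = {s} := Finset.card_eq_one.1 (by rw [h₁c, hd1])
        obtain ⟨s', hs'⟩ : ∃ s', σ₂ = {s'} := Finset.card_eq_one.1 (by rw [h₂c, hd1])
        have hsA : s ∈ A := h₁A (by rw [hs]; simp)
        have hs'A : s' ∈ A := h₂A (by rw [hs']; simp)
        have hss' : s ≠ s' := fun h => heq (by rw [hs, hs', h])
        have hAeq : ({s, s'} : Finset V) = A := by
          rcases hNconn with hc | ⟨_, hA2⟩
          · exfalso
            have hsV : s ∈ vertexSet (induced M A) :=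
              subset_vertexSet h₁.1 (by rw [hs]; simp)
            have hs'V : s' ∈ vertexSet (induced M A) :=
              subset_vertexSet h₂.1 (by rw [hs']; simp)
            have hr := hc.2 s hsV s' hs'V
            rw [SimpleGraph.reachable_iff_reflTransGen] at hr
            rcases Relation.ReflTransGen.cases_head hr with h | ⟨c, hadj, _⟩
            · exact hss' h
            · have hpair : ({s, c} : Finset V) ∈ induced M A := hadj.2
              obtain ⟨t, htf, hsubt⟩ := exists_facet hpair
              have h1 := hNfc t htf
              have h2 := Finset.card_le_card hsubt
              rw [Finset.card_pair hadj.1] at h2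
              omega
          · apply Finset.eq_of_subset_of_card_le
            · intro z hz
              rcases Finset.mem_insert.1 hz with h | h
              · exact h ▸ hsA
              · exact (Finset.mem_singleton.1 h) ▸ hs'A
            · rw [hA2, Finset.card_pair hss']
        refine ⟨∅, Finset.empty_subset A, by rw [Finset.card_empty, hd1], Or.inl rfl,
          s, s', hss', hsA, hs'A, Finset.notMem_empty s, Finset.notMem_empty s',
          by rw [Finset.empty_union, hs], by rw [Finset.empty_union, hs'], ?_⟩
        intro z hzA _ _
        have : z ∈ ({s, s'} : Finset V) := hAeq ▸ hzA
        rcases Finset.mem_insert.1 this with h | h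
        · exact Or.inl h
        · exact Or.inr (Finset.mem_singleton.1 h)
    intro x hfx
    have hxA : x ∉ A := hside σ₂ x h₂.1 hfx
    rw [hσ₂e] at hfx
    obtain ⟨y, hyf, hyA, hxy⟩ := key_move hd hMc hMfc hM2 hMconn hMlink hNfc hγA hγc hγM
      hss' hsA hs'A hsγ hs'γ (by rw [← hσ₁e]; exact h₁M) (by rw [← hσ₂e]; exact h₂M)
      hexact x hfx hxA
    rw [← hσ₁e] at hyf
    rcases hP1 y hyf with h | h
    · exact Or.inl (hxy.trans h)
    · exact Or.inr (hxy.trans h)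
  -- all facets of N have the property
  have hallP : ∀ σ', IsFacet (induced M A) σ' → ∀ x, IsFacet M (σ' ∪ {x}) →
      (edgeGraph (simpComplement M A)).Reachable x u ∨
      (edgeGraph (simpComplement M A)).Reachable x v := by
    intro σ' hσ'
    rcases Nat.lt_or_ge d 2 with hdlt | hd2
    · have hd1 : d = 1 := by omega
      exact hprop σ σ' hσ hσ' (Or.inr hd1) hPσ
    · have hNconn' : CConnected (induced M A) := by
        rcases hNconn with h | h
        · exact h
        · omega
      have hchain := facet_chain_conn (d - 1) (induced M A) hNc
        (fun t ht => by rw [hNfc t ht]; omega) hNconn'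
        (fun s hs hc => hNlink s hs (by omega)) σ σ' hσ hσ'
      clear hσ'
      induction hchain with
      | refl => exact hPσ
      | tail hrt hstep ih => exact hprop _ _ hstep.1 hstep.2.1 (Or.inl ⟨hstep.2.2, hd2⟩) ih
  -- walk from w to u in M, stopping at the first vertex of A
  have hCc : IsComplex (simpComplement M A) := isComplex_induced hMc _
  have hwC : ({w} : Finset V) ∈ simpComplement M A := singleton_mem_of_vertex hCc hw
  have hwM : ({w} : Finset V) ∈ M := (mem_simpComplement_iff.1 hwC).1
  have hwsub := (mem_simpComplement_iff.1 hwC).2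
  have hwV : w ∈ vertexSet M := (Finset.mem_sdiff.1 (hwsub (Finset.mem_singleton_self w))).1
  have hwA : w ∉ A := (Finset.mem_sdiff.1 (hwsub (Finset.mem_singleton_self w))).2
  have huV : u ∈ vertexSet M := subset_vertexSet hfu.1 (Finset.mem_union_right _ (by simp))
  have hreach := hMconn.2 w hwV u huV
  rw [SimpleGraph.reachable_iff_reflTransGen] at hreach
  have hwalk : ∀ z, Relation.ReflTransGen (edgeGraph M).Adj z u → z ∉ A →
      ((edgeGraph (simpComplement M A)).Reachable z u ∨
        ∃ a y, a ∈ A ∧ y ∉ A ∧ ({a, y} : Finset V) ∈ M ∧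
          (edgeGraph (simpComplement M A)).Reachable z y) := by
    intro z hz
    induction hz using Relation.ReflTransGen.head_induction_on with
    | refl => intro _; exact Or.inl (SimpleGraph.Reachable.refl u)
    | head hadj htail ih =>
      rename_i p c
      intro hpA
      by_cases hcA : c ∈ A
      · right
        exact ⟨c, p, hcA, hpA, by rw [Finset.pair_comm]; exact hadj.2,
          SimpleGraph.Reachable.refl p⟩
      · have hedge : (edgeGraph (simpComplement M A)).Adj p c :=
          cEdge hadj.1 hadj.2 hpA hcA
        rcases ih hcA with h | ⟨a, y, h1, h2, h3, h4⟩
        · exact Or.inl (hedge.reachable.trans h)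
        · exact Or.inr ⟨a, y, h1, h2, h3, hedge.reachable.trans h4⟩
  rcases hwalk w hreach hwA with hdone | ⟨a, y, haA, hyA, hayM, hwy⟩
  · exact Or.inl hdone
  -- a facet of N containing a
  have haM : ({a} : Finset V) ∈ M :=
    hMc.2 _ hayM _ (Finset.singleton_subset_iff.2 (by simp)) ⟨a, by simp⟩
  have haN : ({a} : Finset V) ∈ induced M A :=
    mem_induced_iff.2 ⟨haM, Finset.singleton_subset_iff.2 haA⟩
  obtain ⟨σa, hσa, hsuba⟩ := exists_facet haN
  have haσa : a ∈ σa := hsuba (by simp)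
  have hσac : σa.card = d := hNfc σa hσa
  have hya : y ≠ a := fun h => hyA (h ▸ haA)
  have hfinish : (edgeGraph (simpComplement M A)).Reachable y u ∨
      (edgeGraph (simpComplement M A)).Reachable y v := by
    rcases Nat.lt_or_ge d 2 with hdlt | hd2
    · -- d = 1
      have hd1 : d = 1 := by omega
      have hσae : σa = {a} :=
        (Finset.eq_of_subset_of_card_le (Finset.singleton_subset_iff.2 haσa)
          (by rw [hσac, hd1, Finset.card_singleton])).symm
      have hfay : IsFacet M ({a, y} : Finset V) :=
        facet_of_card_eq_facetcard (d := d + 1) hMfc hayM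
          (by rw [Finset.card_pair (Ne.symm hya), hd1])
      have hfay' : IsFacet M (σa ∪ {y}) := by
        rw [hσae, ← Finset.insert_eq]
        exact hfay
      exact hallP σa hσa y hfay'
    · -- d ≥ 2 : recurse into the link of a
      have haVM : a ∈ vertexSet M := subset_vertexSet hayM (by simp)
      have hM'n : IsNormalPM (link M {a}) (d - 1) := link_vertex_normal hd2 hM haVM
      have hM'c : IsComplex (link M {a}) := isComplex_link hMc _
      have hN'eq : induced (link M {a}) (A ∩ vertexSet (link M {a})) =
          link (induced M A) {a} := by
        ext β
        constructor
        · intro h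
          rcases mem_induced_iff.1 h with ⟨hβM', hβA'⟩
          rcases mem_link_iff.1 hβM' with ⟨hβM, hdisj, hun⟩
          have hβA : β ⊆ A := fun z hz => (Finset.mem_inter.1 (hβA' hz)).1
          exact mem_link_iff.2 ⟨mem_induced_iff.2 ⟨hβM, hβA⟩, hdisj,
            mem_induced_iff.2 ⟨hun,
              Finset.union_subset (Finset.singleton_subset_iff.2 haA) hβA⟩⟩
        · intro h
          rcases mem_link_iff.1 h with ⟨hβN, hdisj, hunN⟩
          rcases mem_induced_iff.1 hβN with ⟨hβM, hβA⟩
          have hβM' : β ∈ link M {a} := mem_link_iff.2 ⟨hβM, hdisj, induced_subset hunN⟩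
          exact mem_induced_iff.2 ⟨hβM',
            fun z hz => Finset.mem_inter.2 ⟨hβA hz, subset_vertexSet hβM' hz⟩⟩
      have hN'fc : ∀ t, IsFacet (induced (link M {a}) (A ∩ vertexSet (link M {a}))) t →
          t.card = d - 1 := by
        intro t ht
        rw [hN'eq] at ht
        have h1 := facet_insert_of_link_facet hNc ht
        have h2 := hNfc _ h1
        rw [card_union_singleton (notmem_of_link_mem ht.1)] at h2
        omega
      have hN'2 : ∀ s ∈ induced (link M {a}) (A ∩ vertexSet (link M {a})),
          s.card = (d - 1) - 1 →
          ((induced (link M {a}) (A ∩ vertexSet (link M {a}))).filter fun t =>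
            IsFacet (induced (link M {a}) (A ∩ vertexSet (link M {a}))) t ∧ s ⊆ t).card = 2 := by
        intro s hs hc
        rw [hN'eq] at hs ⊢
        apply link_ridge_two hNc hs
        apply hN2 _ (mem_link_iff.1 hs).2.2
        rw [card_union_singleton (notmem_of_link_mem hs), hc]
        omega
      have hσ'f : IsFacet (link (induced M A) {a}) (σa \ {a}) :=
        link_facet_of_facet hNc hσa haσa
          (by rw [← Finset.card_pos, card_sdiff_singleton haσa, hσac]; omega)
      have hN'conn : CConnected (induced (link M {a}) (A ∩ vertexSet (link M {a}))) ∨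
          (d - 1 = 1 ∧ (A ∩ vertexSet (link M {a})).card = 2) := by
        rcases Nat.lt_or_ge d 3 with h3 | h3
        · right
          refine ⟨by omega, ?_⟩
          have hAV : A ∩ vertexSet (link M {a}) =
              vertexSet (induced (link M {a}) (A ∩ vertexSet (link M {a}))) := by
            ext z
            constructor
            · intro hz
              have hzM' : ({z} : Finset V) ∈ link M {a} :=
                singleton_mem_of_vertex hM'c (Finset.mem_inter.1 hz).2
              exact subset_vertexSet
                (mem_induced_iff.2 ⟨hzM', Finset.singleton_subset_iff.2 hz⟩) (by simp)
            · intro hz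
              obtain ⟨β, hβ, hzβ⟩ := mem_vertexSet_iff.1 hz
              exact (mem_induced_iff.1 hβ).2 hzβ
          rw [hAV, hN'eq]
          obtain ⟨x₁, x₂, hx12, hx1a, hx2a, hf1, hf2, huniq2⟩ :=
            ridge_two_ext (M := induced M A) (d := d - 1)
              (hN2 {a} haN (by rw [Finset.card_singleton]; omega))
              (fun t ht => by rw [hNfc t ht]; omega)
              (by rw [Finset.card_singleton]; omega)
          have hveq : vertexSet (link (induced M A) {a}) = {x₁, x₂} := by
            ext z
            constructor
            · intro hz
              have hzT : ({z} : Finset V) ∈ link (induced M A) {a} :=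
                singleton_mem_of_vertex (isComplex_link hNc _) hz
              rcases mem_link_iff.1 hzT with ⟨hzN, hzd, hzu⟩
              have hza : a ∉ ({z} : Finset V) := notmem_of_link_mem hzT
              have hzf : IsFacet (induced M A) ({a} ∪ {z}) := by
                refine facet_of_card_eq_facetcard hNfc hzu ?_
                rw [card_union_singleton hza, Finset.card_singleton]
                omega
              have hznota : z ∉ ({a} : Finset V) := fun hh =>
                hza (Finset.mem_singleton.2 (Finset.mem_singleton.1 hh).symm)
              rcases huniq2 _ hzf Finset.subset_union_left with h | h
              · exact Finset.mem_insert.2 (Or.inl (eq_of_union_singleton hznota h))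
              · exact Finset.mem_insert.2 (Or.inr
                  (Finset.mem_singleton.2 (eq_of_union_singleton hznota h)))
            · intro hz
              have key : ∀ t : V, t ∉ ({a} : Finset V) →
                  ({a} ∪ {t} : Finset V) ∈ induced M A →
                  t ∈ vertexSet (link (induced M A) {a}) := by
                intro t hta hmem
                have htT : ({t} : Finset V) ∈ link (induced M A) {a} := by
                  refine mem_link_iff.2 ⟨?_, ?_, hmem⟩
                  · exact hNc.2 _ hmem _ Finset.subset_union_right ⟨t, by simp⟩
                  · exact Finset.disjoint_singleton_left.2 (fun hh =>
                      hta (Finset.mem_singleton.2 (Finset.mem_singleton.1 hh).symm))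
                exact subset_vertexSet htT (by simp)
              rcases Finset.mem_insert.1 hz with h | h
              · subst h; exact key _ hx1a hf1.1
              · rw [Finset.mem_singleton.1 h]; exact key _ hx2a hf2.1
          rw [hveq]
          exact Finset.card_pair hx12
        · left
          rw [hN'eq]
          apply hNlink _ haN
          rw [Finset.card_singleton]
          omega
      have hN'link : ∀ s ∈ induced (link M {a}) (A ∩ vertexSet (link M {a})),
          s.card ≤ (d - 1) - 2 →
          CConnected (link (induced (link M {a}) (A ∩ vertexSet (link M {a}))) s) := by
        intro s hs hc
        rw [hN'eq] at hs ⊢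
        rw [link_link hNc (notmem_of_link_mem hs)]
        have hpos : 0 < s.card := Finset.card_pos.2 (hNc.1 _ (mem_link_iff.1 hs).1)
        apply hNlink _ (mem_link_iff.1 hs).2.2
        rw [card_union_singleton (notmem_of_link_mem hs)]
        omega
      have hσ'mem : σa \ {a} ∈ induced (link M {a}) (A ∩ vertexSet (link M {a})) := by
        rw [hN'eq]
        exact hσ'f.1
      have hσ'M' : σa \ {a} ∈ link M {a} := induced_subset hσ'mem
      have hσ'c : (σa \ {a}).card = d - 1 := by
        rw [card_sdiff_singleton haσa, hσac]
      have hM'fc : ∀ t, IsFacet (link M {a}) t → t.card = (d - 1) + 1 := hM'n.1.2.1.2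
      have hM'2 := hM'n.1.2.2
      obtain ⟨u₂, v₂, hne2, hu2, hv2, hfu2, hfv2, _⟩ :=
        ridge_two_ext (hM'2 _ hσ'M' hσ'c) hM'fc hσ'c
      have hfacetA' : ∀ z, IsFacet (link M {a}) ((σa \ {a}) ∪ {z}) → z ∉ A := by
        intro z hfz hzA
        have hzV : z ∈ vertexSet (link M {a}) :=
          subset_vertexSet hfz.1 (Finset.mem_union_right _ (by simp))
        have hτA' : (σa \ {a}) ∪ {z} ⊆ A ∩ vertexSet (link M {a}) :=
          Finset.union_subset (mem_induced_iff.1 hσ'mem).2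
            (Finset.singleton_subset_iff.2 (Finset.mem_inter.2 ⟨hzA, hzV⟩))
        have hmem2 : (σa \ {a}) ∪ {z} ∈
            induced (link M {a}) (A ∩ vertexSet (link M {a})) :=
          mem_induced_iff.2 ⟨hfz.1, hτA'⟩
        obtain ⟨t, htf, hsubt⟩ := exists_facet hmem2
        have h1 := hN'fc t htf
        have h2 := Finset.card_le_card hsubt
        have h3 := hM'fc _ hfz
        omega
      have hu2A : u₂ ∉ A := hfacetA' u₂ hfu2
      have hv2A : v₂ ∉ A := hfacetA' v₂ hfv2
      have hu2A' : u₂ ∉ A ∩ vertexSet (link M {a}) :=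
        fun h => hu2A (Finset.mem_inter.1 h).1
      have hv2A' : v₂ ∉ A ∩ vertexSet (link M {a}) :=
        fun h => hv2A (Finset.mem_inter.1 h).1
      have hIH := IH (d - 1) (by omega) (by omega) (link M {a})
        (A ∩ vertexSet (link M {a})) hM'n Finset.inter_subset_right
        hN'fc hN'2 hN'conn hN'link (σa \ {a}) u₂ v₂
        (by rw [hN'eq]; exact hσ'f) hu2A' hv2A' hne2 hfu2 hfv2
      have hyM' : ({y} : Finset V) ∈ link M {a} := by
        refine mem_link_iff.2 ⟨?_, ?_, ?_⟩
        · exact hMc.2 _ hayM _ (Finset.singleton_subset_iff.2 (by simp)) ⟨y, by simp⟩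
        · exact Finset.disjoint_singleton_left.2 (by simpa using Ne.symm hya)
        · rw [← Finset.insert_eq]
          exact hayM
      have hyC' : y ∈ vertexSet (simpComplement (link M {a}) (A ∩ vertexSet (link M {a}))) := by
        refine subset_vertexSet (mem_simpComplement_iff.2 ⟨hyM', ?_⟩) (by simp)
        refine Finset.singleton_subset_iff.2 (Finset.mem_sdiff.2 ⟨?_, ?_⟩)
        · exact subset_vertexSet hyM' (by simp)
        · exact fun h => hyA (Finset.mem_inter.1 h).1
      have hy2 := hIH y hyC'
      have hmono : edgeGraph (simpComplement (link M {a}) (A ∩ vertexSet (link M {a}))) ≤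
          edgeGraph (simpComplement M A) := by
        intro p q hpq
        obtain ⟨hpq1, hpq2⟩ := hpq
        rcases mem_simpComplement_iff.1 hpq2 with ⟨hpqM', hpqsub⟩
        have hpM : ({p, q} : Finset V) ∈ M := link_subset hpqM'
        have hpA : p ∉ A := by
          have hh := hpqsub (by simp : p ∈ ({p, q} : Finset V))
          rcases Finset.mem_sdiff.1 hh with ⟨hpV', hpA'⟩
          exact fun h => hpA' (Finset.mem_inter.2 ⟨h, hpV'⟩)
        have hqA : q ∉ A := by
          have hh := hpqsub (by simp : q ∈ ({p, q} : Finset V))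
          rcases Finset.mem_sdiff.1 hh with ⟨hqV', hqA'⟩
          exact fun h => hqA' (Finset.mem_inter.2 ⟨h, hqV'⟩)
        exact cEdge hpq1 hpM hpA hqA
      have hupu : IsFacet M (σa ∪ {u₂}) := by
        have h1 := facet_insert_of_link_facet hMc hfu2
        have heqq : ({a} : Finset V) ∪ ((σa \ {a}) ∪ {u₂}) = σa ∪ {u₂} := by
          rw [← Finset.union_assoc,
            Finset.union_sdiff_of_subset (Finset.singleton_subset_iff.2 haσa)]
        rwa [heqq] at h1
      have hupv : IsFacet M (σa ∪ {v₂}) := by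
        have h1 := facet_insert_of_link_facet hMc hfv2
        have heqq : ({a} : Finset V) ∪ ((σa \ {a}) ∪ {v₂}) = σa ∪ {v₂} := by
          rw [← Finset.union_assoc,
            Finset.union_sdiff_of_subset (Finset.singleton_subset_iff.2 haσa)]
        rwa [heqq] at h1
      have hru := hallP σa hσa u₂ hupu
      have hrv := hallP σa hσa v₂ hupv
      rcases hy2 with h | h
      · have hy' := SimpleGraph.Reachable.mono hmono h
        rcases hru with h' | h'
        · exact Or.inl (hy'.trans h')
        · exact Or.inr (hy'.trans h')
      · have hy' := SimpleGraph.Reachable.mono hmono h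
        rcases hrv with h' | h'
        · exact Or.inl (hy'.trans h')
        · exact Or.inr (hy'.trans h')
  rcases hfinish with h | h
  · exact Or.inl (hwy.trans h)
  · exact Or.inr (hwy.trans h)

end MainThm

/-- If `N = M[A]` is a `(d-1)`-dimensional induced subcomplex of the normal
`d`-pseudomanifold `M` which is a normal `(d-1)`-pseudomanifold, then the simplicial
complement `C(N, M)` has at most two connected components. -/
theorem stmt4 {V : Type} [DecidableEq V] (d : ℕ) (hd : 1 ≤ d)
    (M : Finset (Finset V)) (A : Finset V)
    (hM : IsNormalPM M d) (hA : A ⊆ vertexSet M)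
    (hN : IsNormalPM (induced M A) (d - 1)) :
    ∃ u v : V, ∀ w ∈ vertexSet (simpComplement M A),
      (edgeGraph (simpComplement M A)).Reachable w u ∨
      (edgeGraph (simpComplement M A)).Reachable w v := by
  have hMc : IsComplex M := hM.1.1
  have hMfc : ∀ t, IsFacet M t → t.card = d + 1 := hM.1.2.1.2
  have hM2 := hM.1.2.2
  have hNp : IsPure (induced M A) (d - 1) := hN.1.2.1
  have hN2 := hN.1.2.2
  have hNconn : CConnected (induced M A) := hN.2.1
  have hNlink := hN.2.2
  have hNfc : ∀ t, IsFacet (induced M A) t → t.card = d := by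
    intro t ht
    have h1 := hNp.2 t ht
    omega
  obtain ⟨s0, hs0⟩ := hNp.1
  obtain ⟨σ, hσ, -⟩ := exists_facet hs0
  have hσM : σ ∈ M := induced_subset hσ.1
  have hσc : σ.card = d := hNfc σ hσ
  have hσA : σ ⊆ A := (mem_induced_iff.1 hσ.1).2
  obtain ⟨u, v, huv, huσ, hvσ, hfu, hfv, -⟩ := ridge_two_ext (hM2 σ hσM hσc) hMfc hσc
  have hfacetA : ∀ τ, IsFacet M τ → ¬ τ ⊆ A := by
    intro τ hτ hss
    have hτN : τ ∈ induced M A := mem_induced_iff.2 ⟨hτ.1, hss⟩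
    obtain ⟨τ', hτ', hsub⟩ := exists_facet hτN
    have h1 := hNfc τ' hτ'
    have h2 := hMfc τ hτ
    have h3 := Finset.card_le_card hsub
    omega
  have huA : u ∉ A := fun h => hfacetA _ hfu
    (Finset.union_subset hσA (Finset.singleton_subset_iff.2 h))
  have hvA : v ∉ A := fun h => hfacetA _ hfv
    (Finset.union_subset hσA (Finset.singleton_subset_iff.2 h))
  refine ⟨u, v, ?_⟩
  intro w hw
  exact main_thm d hd M A hM hA hNfc (fun s hs hc => hN2 s hs hc) (Or.inl hNconn)
    (fun s hs hc => hNlink s hs (by omega)) σ u v hσ huA hvA huv hfu hfv w hw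

end
end

section
/- Let $X$ be a normal pseudomanifold of dimension $d \geq 2$ which is not the standard $d$-sphere $S^d_{d+2}$. Then any two vertices of degree $d+1$ in $X$ are non-adjacent in the edge graph of $X$. -/
open Finset

noncomputable section

attribute [local instance] Classical.propDecidable

variable {V : Type} [DecidableEq V]

/-! ### Auxiliary lemmas -/

lemma aux_mem_vertexSet {K : Finset (Finset V)} {v : V} :
    v ∈ vertexSet K ↔ ∃ s ∈ K, v ∈ s := by
  simp [vertexSet, Finset.mem_sup]

lemma aux_face_subset_vertexSet {K : Finset (Finset V)} {s : Finset V} (hs : s ∈ K) :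
    s ⊆ vertexSet K := fun v hv => aux_mem_vertexSet.2 ⟨s, hs, hv⟩

lemma aux_exists_facet {K : Finset (Finset V)} {s : Finset V} (hs : s ∈ K) :
    ∃ t, IsFacet K t ∧ s ⊆ t := by
  obtain ⟨t, ht, hmax⟩ := (K.filter fun t => s ⊆ t).exists_max_image Finset.card
    ⟨s, by simp [hs]⟩
  rw [mem_filter] at ht
  refine ⟨t, ⟨ht.1, fun t' ht' hsub => ?_⟩, ht.2⟩
  exact Finset.eq_of_subset_of_card_le hsub
    (hmax t' (mem_filter.2 ⟨ht', ht.2.trans hsub⟩))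

lemma aux_face_card_le {K : Finset (Finset V)} {d : ℕ} (hp : IsPure K d) {s : Finset V}
    (hs : s ∈ K) : s.card ≤ d + 1 := by
  obtain ⟨t, ht, hst⟩ := aux_exists_facet hs
  exact (Finset.card_le_card hst).trans (hp.2 t ht).le

lemma aux_facet_of_card {K : Finset (Finset V)} {d : ℕ} (hp : IsPure K d) {s : Finset V}
    (hs : s ∈ K) (hc : s.card = d + 1) : IsFacet K s :=
  ⟨hs, fun t ht hst => Finset.eq_of_subset_of_card_le hst
    ((aux_face_card_le hp ht).trans hc.ge)⟩

lemma aux_singleton_mem {K : Finset (Finset V)} (hK : IsComplex K) {v : V}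
    (hv : v ∈ vertexSet K) : ({v} : Finset V) ∈ K := by
  obtain ⟨s, hs, hvs⟩ := aux_mem_vertexSet.1 hv
  exact hK.2 s hs {v} (Finset.singleton_subset_iff.2 hvs) ⟨v, Finset.mem_singleton_self v⟩

lemma aux_mem_link {K : Finset (Finset V)} {α β : Finset V} :
    β ∈ link K α ↔ β ∈ K ∧ Disjoint α β ∧ α ∪ β ∈ K := by
  simp [link, Finset.mem_filter, and_assoc]

lemma aux_link_subset {K : Finset (Finset V)} {α : Finset V} : link K α ⊆ K :=
  Finset.filter_subset _ _

lemma aux_link_isComplex {K : Finset (Finset V)} (hK : IsComplex K) (α : Finset V) :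
    IsComplex (link K α) := by
  constructor
  · intro s hs; exact hK.1 s (aux_link_subset hs)
  · intro s hs t hts htne
    rw [aux_mem_link] at hs ⊢
    refine ⟨hK.2 s hs.1 t hts htne, hs.2.1.mono_right hts, ?_⟩
    refine hK.2 (α ∪ s) hs.2.2 (α ∪ t) (Finset.union_subset_union_right hts) ?_
    exact htne.mono Finset.subset_union_right

lemma aux_link_link {K : Finset (Finset V)} (hK : IsComplex K) {α β : Finset V}
    (hd : Disjoint α β) : link (link K α) β = link K (α ∪ β) := by
  ext γ
  simp only [aux_mem_link]
  constructor
  · rintro ⟨⟨hγK, hαγ, hαγK⟩, hβγ, _, _, hK3⟩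
    refine ⟨hγK, Finset.disjoint_union_left.2 ⟨hαγ, hβγ⟩, ?_⟩
    rwa [Finset.union_assoc]
  · rintro ⟨hγK, hdis, hall⟩
    rw [Finset.disjoint_union_left] at hdis
    have hγne : γ.Nonempty := hK.1 γ hγK
    have hassoc : α ∪ β ∪ γ = α ∪ (β ∪ γ) := Finset.union_assoc α β γ
    refine ⟨⟨hγK, hdis.1, ?_⟩, hdis.2, ?_, Finset.disjoint_union_right.2 ⟨hd, hdis.1⟩, ?_⟩
    · refine hK.2 _ hall (α ∪ γ) ?_ (hγne.mono Finset.subset_union_right)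
      rw [hassoc]
      exact Finset.union_subset_union_right Finset.subset_union_right
    · refine hK.2 _ hall (β ∪ γ) ?_ (hγne.mono Finset.subset_union_right)
      rw [hassoc]
      exact Finset.subset_union_right
    · rwa [hassoc] at hall

lemma aux_erase_mem_link {K : Finset (Finset V)} (hK : IsComplex K) {F : Finset V} {x : V}
    (hF : F ∈ K) (hx : x ∈ F) (hne : (F.erase x).Nonempty) : F.erase x ∈ link K {x} := by
  rw [aux_mem_link]
  refine ⟨hK.2 F hF _ (Finset.erase_subset x F) hne, ?_, ?_⟩
  · simp
  · rw [← Finset.insert_eq, Finset.insert_erase hx]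
    exact hF

lemma aux_facet_insert {K : Finset (Finset V)} {d : ℕ} (hw : IsWeakPM K (d + 1)) {x : V}
    {τ : Finset V} (hτ : IsFacet (link K {x}) τ) : x ∉ τ ∧ IsFacet K (insert x τ) := by
  obtain ⟨hτl, hτmax⟩ := hτ
  rw [aux_mem_link] at hτl
  obtain ⟨hτK, hdisj, hiK⟩ := hτl
  have hxτ : x ∉ τ := Finset.disjoint_singleton_left.1 hdisj
  rw [← Finset.insert_eq] at hiK
  obtain ⟨F, hF, hsub⟩ := aux_exists_facet hiK
  have hxF : x ∈ F := hsub (Finset.mem_insert_self x τ)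
  have hcF : F.card = d + 2 := hw.2.1.2 F hF
  have hne : (F.erase x).Nonempty := by
    rw [← Finset.card_pos, Finset.card_erase_of_mem hxF, hcF]; omega
  have hmem : F.erase x ∈ link K {x} := aux_erase_mem_link hw.1 hF.1 hxF hne
  have hτF : τ = F.erase x := by
    refine hτmax _ hmem (Finset.subset_erase.2 ⟨?_, hxτ⟩)
    exact (Finset.subset_insert x τ).trans hsub
  refine ⟨hxτ, ?_⟩
  rw [hτF, Finset.insert_erase hxF]
  exact hF

lemma aux_facet_erase {K : Finset (Finset V)} {d : ℕ} (hw : IsWeakPM K (d + 1)) {F : Finset V}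
    {x : V} (hF : IsFacet K F) (hx : x ∈ F) : IsFacet (link K {x}) (F.erase x) := by
  have hcF : F.card = d + 2 := hw.2.1.2 F hF
  have hne : (F.erase x).Nonempty := by
    rw [← Finset.card_pos, Finset.card_erase_of_mem hx, hcF]; omega
  refine ⟨aux_erase_mem_link hw.1 hF.1 hx hne, ?_⟩
  intro τ hτ hsub
  rw [aux_mem_link] at hτ
  have hxτ : x ∉ τ := Finset.disjoint_singleton_left.1 hτ.2.1
  have hFτ : F = {x} ∪ τ := by
    refine hF.2 _ hτ.2.2 ?_
    rw [← Finset.insert_eq]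
    intro z hz
    rcases eq_or_ne z x with rfl | hzx
    · exact Finset.mem_insert_self _ _
    · exact Finset.mem_insert_of_mem (hsub (Finset.mem_erase.2 ⟨hzx, hz⟩))
  refine Finset.Subset.antisymm hsub (Finset.subset_erase.2 ⟨?_, hxτ⟩)
  rw [hFτ, ← Finset.insert_eq]
  exact Finset.subset_insert x τ

lemma aux_link_weakPM {K : Finset (Finset V)} {d : ℕ} (hw : IsWeakPM K (d + 1)) {x : V}
    (hx : x ∈ vertexSet K) : IsWeakPM (link K {x}) d := by
  have hcomplex := aux_link_isComplex hw.1 ({x} : Finset V)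
  have hpure : IsPure (link K {x}) d := by
    constructor
    · obtain ⟨F, hF, hsub⟩ := aux_exists_facet (aux_singleton_mem hw.1 hx)
      have hxF : x ∈ F := hsub (Finset.mem_singleton_self x)
      exact ⟨F.erase x, (aux_facet_erase hw hF hxF).1⟩
    · intro τ hτ
      obtain ⟨hxτ, hfac⟩ := aux_facet_insert hw hτ
      have := hw.2.1.2 _ hfac
      rw [Finset.card_insert_of_notMem hxτ] at this
      omega
  refine ⟨hcomplex, hpure, ?_⟩
  intro s hs hcard
  have hsl := aux_mem_link.1 hs
  have hxs : x ∉ s := Finset.disjoint_singleton_left.1 hsl.2.1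
  have hs' : insert x s ∈ K := by rw [Finset.insert_eq]; exact hsl.2.2
  have hc' : (insert x s).card = d + 1 := by
    rw [Finset.card_insert_of_notMem hxs, hcard]
  have hkey := hw.2.2 _ hs' hc'
  rw [← hkey]
  apply Finset.card_bij (fun τ _ => insert x τ)
  · intro τ hτ
    rw [Finset.mem_filter] at hτ ⊢
    obtain ⟨hτl, hτfac, hsτ⟩ := hτ
    obtain ⟨hxτ, hfac⟩ := aux_facet_insert hw hτfac
    exact ⟨hfac.1, hfac, Finset.insert_subset_insert x hsτ⟩
  · intro τ₁ h₁ τ₂ h₂ heq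
    have hx₁ : x ∉ τ₁ := Finset.disjoint_singleton_left.1 (aux_mem_link.1 (Finset.mem_filter.1 h₁).1).2.1
    have hx₂ : x ∉ τ₂ := Finset.disjoint_singleton_left.1 (aux_mem_link.1 (Finset.mem_filter.1 h₂).1).2.1
    rw [← Finset.erase_insert hx₁, ← Finset.erase_insert hx₂, heq]
  · intro t ht
    rw [Finset.mem_filter] at ht
    obtain ⟨htK, htfac, hst⟩ := ht
    have hxt : x ∈ t := hst (Finset.mem_insert_self x s)
    refine ⟨t.erase x, ?_, Finset.insert_erase hxt⟩
    rw [Finset.mem_filter]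
    refine ⟨(aux_facet_erase hw htfac hxt).1, aux_facet_erase hw htfac hxt, ?_⟩
    refine Finset.subset_erase.2 ⟨?_, hxs⟩
    exact (Finset.subset_insert x s).trans hst

/-- Step 1: if a vertex has degree `d+1`, every small subset of its link's vertex set is
a face of the link. -/
lemma aux_step1 {X : Finset (Finset V)} {d : ℕ} (hd : 1 ≤ d) (hw : IsWeakPM X d)
    {u : V} (hu : u ∈ vertexSet X)
    (hA : (vertexSet (link X {u})).card = d + 1) :
    ∀ τ ⊆ vertexSet (link X {u}), τ.Nonempty → τ.card ≤ d → τ ∈ link X {u} := by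
  set A := vertexSet (link X {u}) with hAdef
  have huA : u ∉ A := by
    intro h
    obtain ⟨s, hs, hus⟩ := aux_mem_vertexSet.1 h
    exact Finset.disjoint_singleton_left.1 (aux_mem_link.1 hs).2.1 hus
  have hfacsub : ∀ F, IsFacet X F → u ∈ F → F ⊆ insert u A := by
    intro F hF huF
    have hcF : F.card = d + 1 := hw.2.1.2 F hF
    have hne : (F.erase u).Nonempty := by
      rw [← Finset.card_pos, Finset.card_erase_of_mem huF, hcF]; omega
    have hmem : F.erase u ∈ link X {u} := aux_erase_mem_link hw.1 hF.1 huF hne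
    have hsubA : F.erase u ⊆ A := aux_face_subset_vertexSet hmem
    intro z hz
    rcases eq_or_ne z u with rfl | hzu
    · exact Finset.mem_insert_self _ _
    · exact Finset.mem_insert_of_mem (hsubA (Finset.mem_erase.2 ⟨hzu, hz⟩))
  obtain ⟨F₀, hF₀, hsub₀⟩ := aux_exists_facet (aux_singleton_mem hw.1 hu)
  have huF₀ : u ∈ F₀ := hsub₀ (Finset.mem_singleton_self u)
  set τ₀ := F₀.erase u with hτ₀def
  have hcF₀ : F₀.card = d + 1 := hw.2.1.2 F₀ hF₀
  have hcτ₀ : τ₀.card = d := by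
    rw [hτ₀def, Finset.card_erase_of_mem huF₀, hcF₀]
    omega
  have hτ₀A : τ₀ ⊆ A := by
    have hne : τ₀.Nonempty := by rw [← Finset.card_pos, hcτ₀]; omega
    exact aux_face_subset_vertexSet (aux_erase_mem_link hw.1 hF₀.1 huF₀ hne)
  have hiτ₀ : insert u τ₀ = F₀ := Finset.insert_erase huF₀
  have hmain : ∀ τ ⊆ A, τ.card = d → IsFacet X (insert u τ) := by
    intro τ hτA hcτ
    rcases eq_or_ne τ τ₀ with rfl | hne
    · rw [hiτ₀]; exact hF₀
    -- swap argument
    have hcup : (τ ∪ τ₀).card ≤ d + 1 := by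
      rw [← hA]; exact Finset.card_le_card (Finset.union_subset hτA hτ₀A)
    have hcap_ne : τ ∩ τ₀ ≠ τ := by
      intro h
      apply hne
      apply Finset.eq_of_subset_of_card_le
      · rw [← h]; exact Finset.inter_subset_right
      · rw [hcτ, hcτ₀]
    have hcap_le : (τ ∩ τ₀).card ≤ d - 1 := by
      have h1 : (τ ∩ τ₀).card ≤ τ.card := Finset.card_le_card Finset.inter_subset_left
      rcases Nat.lt_or_ge (τ ∩ τ₀).card τ.card with h | h
      · omega
      · exfalso
        exact hcap_ne (Finset.eq_of_subset_of_card_le Finset.inter_subset_left (by omega))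
    have hsum := Finset.card_union_add_card_inter τ τ₀
    rw [hcτ, hcτ₀] at hsum
    have hcap : (τ ∩ τ₀).card = d - 1 := by omega
    have hcupA : (τ ∪ τ₀).card = d + 1 := by omega
    have hAeq : τ ∪ τ₀ = A :=
      Finset.eq_of_subset_of_card_le (Finset.union_subset hτA hτ₀A) (by omega)
    set s := insert u (τ ∩ τ₀) with hsdef
    have huτ : u ∉ τ := fun h => huA (hτA h)
    have hucap : u ∉ τ ∩ τ₀ := fun h => huτ (Finset.mem_inter.1 h).1
    have hcs : s.card = d := by
      rw [hsdef, Finset.card_insert_of_notMem hucap, hcap]; omega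
    have hsX : s ∈ X := by
      refine hw.1.2 F₀ hF₀.1 s ?_ ⟨u, Finset.mem_insert_self _ _⟩
      rw [hsdef, ← hiτ₀]
      exact Finset.insert_subset_insert u Finset.inter_subset_right
    have hfil := hw.2.2 s hsX hcs
    set C := ((insert u A) \ s).image (fun z => insert z s) with hCdef
    have hsubA' : s ⊆ insert u A := by
      rw [hsdef]
      exact Finset.insert_subset_insert u ((Finset.inter_subset_left).trans hτA)
    have hcdiff : ((insert u A) \ s).card = 2 := by
      rw [Finset.card_sdiff_of_subset hsubA', Finset.card_insert_of_notMem huA, hA, hcs]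
      omega
    have hCcard : C.card ≤ 2 := by
      rw [hCdef, ← hcdiff]; exact Finset.card_image_le
    have hfilsub : (X.filter fun t => IsFacet X t ∧ s ⊆ t) ⊆ C := by
      intro t ht
      rw [Finset.mem_filter] at ht
      obtain ⟨htX, htfac, hst⟩ := ht
      have hut : u ∈ t := hst (Finset.mem_insert_self _ _)
      have htsub : t ⊆ insert u A := hfacsub t htfac hut
      have hct : t.card = d + 1 := hw.2.1.2 t htfac
      have hdiff : (t \ s).card = 1 := by
        rw [Finset.card_sdiff_of_subset hst, hct, hcs]; omega
      obtain ⟨z, hz⟩ := Finset.card_eq_one.1 hdiff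
      have hzt : z ∈ t \ s := hz ▸ Finset.mem_singleton_self z
      rw [hCdef, Finset.mem_image]
      refine ⟨z, ?_, ?_⟩
      · exact Finset.mem_sdiff.2 ⟨htsub (Finset.mem_sdiff.1 hzt).1, (Finset.mem_sdiff.1 hzt).2⟩
      · rw [← Finset.union_sdiff_of_subset hst, hz, Finset.union_comm, ← Finset.insert_eq]
    have hfileq : (X.filter fun t => IsFacet X t ∧ s ⊆ t) = C := by
      apply Finset.eq_of_subset_of_card_le hfilsub
      rw [hfil]; exact hCcard
    -- now show insert u τ ∈ C
    have hτsd : (τ \ τ₀).card = 1 := by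
      have := Finset.card_sdiff_add_card_inter τ τ₀
      rw [hcτ, hcap] at this; omega
    obtain ⟨b, hb⟩ := Finset.card_eq_one.1 hτsd
    have hbτ : b ∈ τ \ τ₀ := hb ▸ Finset.mem_singleton_self b
    have hbin : b ∈ τ := (Finset.mem_sdiff.1 hbτ).1
    have hbout : b ∉ τ₀ := (Finset.mem_sdiff.1 hbτ).2
    have hbne : b ≠ u := fun h => huA (hτA (h ▸ hbin))
    have hτeq : τ = insert b (τ ∩ τ₀) := by
      conv_lhs => rw [← Finset.sdiff_union_inter τ τ₀]
      rw [hb, ← Finset.insert_eq]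
    have hiuτ : insert u τ = insert b s := by
      rw [hτeq, hsdef, Finset.insert_comm]
    have hmemC : insert u τ ∈ C := by
      rw [hCdef, Finset.mem_image]
      refine ⟨b, Finset.mem_sdiff.2 ⟨Finset.mem_insert_of_mem (hτA hbin), ?_⟩, hiuτ.symm⟩
      rw [hsdef, Finset.mem_insert]
      push_neg
      exact ⟨hbne, fun h => hbout (Finset.mem_inter.1 h).2⟩
    rw [← hfileq, Finset.mem_filter] at hmemC
    exact hmemC.2.1
  intro τ hτA hτne hτcard
  obtain ⟨τ', hττ', hτ'A, hcτ'⟩ := Finset.exists_subsuperset_card_eq hτA hτcard (by rw [hA]; omega)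
  have hfac := hmain τ' hτ'A hcτ'
  have hτX : τ ∈ X := hw.1.2 _ hfac.1 τ (hττ'.trans (Finset.subset_insert u τ')) hτne
  rw [aux_mem_link]
  refine ⟨hτX, Finset.disjoint_singleton_left.2 (fun h => huA (hτA h)), ?_⟩
  rw [← Finset.insert_eq]
  refine hw.1.2 _ hfac.1 (insert u τ) (Finset.insert_subset_insert u hττ')
    ⟨u, Finset.mem_insert_self _ _⟩

/-- A walk from inside a set to outside it must cross the boundary. -/
lemma aux_cross {G : SimpleGraph V} {S : Finset V} :
    ∀ {a b : V}, G.Walk a b → a ∈ S → b ∉ S → ∃ p ∈ S, ∃ q, q ∉ S ∧ G.Adj p q := by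
  intro a b w
  induction w with
  | nil => intro h1 h2; exact absurd h1 h2
  | @cons x y z h w ih =>
    intro hx hz
    by_cases hy : y ∈ S
    · exact ih hy hz
    · exact ⟨x, hx, y, hy, h⟩

/-- No edge of a suitable normal pseudomanifold leaves the vertex set of an induced
boundary-of-simplex subcomplex. -/
lemma aux_nosep : ∀ (d : ℕ), 1 ≤ d → ∀ (X : Finset (Finset V)), IsWeakPM X d →
    (∀ s ∈ X, s.card ≤ d - 1 → CConnected (link X s)) →
    ∀ (B : Finset V), B.card = d + 2 →
    (∀ s ⊆ B, s.Nonempty → s ≠ B → s ∈ X) →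
    ∀ x ∈ B, ∀ y ∉ B, ({x, y} : Finset V) ∉ X := by
  intro d
  induction d with
  | zero => omega
  | succ d ih =>
    intro _ X hw hlinks B hB hsub x hx y hy hmem
    have hxy : x ≠ y := fun h => hy (h ▸ hx)
    have hcxy : ({x, y} : Finset V).card = 2 := Finset.card_pair hxy
    rcases Nat.eq_zero_or_pos d with rfl | hd1
    · -- base case : dimension 1
      have hxX : ({x} : Finset V) ∈ X :=
        hw.1.2 _ hmem {x} (by simp) ⟨x, Finset.mem_singleton_self x⟩
      have hfil := hw.2.2 {x} hxX (Finset.card_singleton x)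
      have hcB' : (B.erase x).card = 2 := by
        rw [Finset.card_erase_of_mem hx, hB]
      obtain ⟨b₁, b₂, hb12, hBer⟩ := Finset.card_eq_two.1 hcB'
      have hb₁ : b₁ ∈ B.erase x := by rw [hBer]; simp
      have hb₂ : b₂ ∈ B.erase x := by rw [hBer]; simp
      have hfac : ∀ b ∈ B.erase x, IsFacet X {x, b} := by
        intro b hb
        have hbB : b ∈ B := Finset.mem_of_mem_erase hb
        have hbx : b ≠ x := Finset.ne_of_mem_erase hb
        have hmemb : ({x, b} : Finset V) ∈ X := by
          refine hsub _ ?_ ⟨x, by simp⟩ ?_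
          · intro z hz
            rcases Finset.mem_insert.1 hz with rfl | hz
            · exact hx
            · rwa [Finset.mem_singleton.1 hz]
          · intro h
            have := h ▸ hB
            rw [Finset.card_pair (Ne.symm hbx)] at this
            omega
        exact aux_facet_of_card hw.2.1 hmemb (Finset.card_pair (Ne.symm hbx))
      have hfacxy : IsFacet X {x, y} := aux_facet_of_card hw.2.1 hmem hcxy
      have htriple : ({({x, y} : Finset V), {x, b₁}, {x, b₂}} : Finset (Finset V)) ⊆
          X.filter fun t => IsFacet X t ∧ ({x} : Finset V) ⊆ t := by
        intro t ht
        simp only [Finset.mem_insert, Finset.mem_singleton] at ht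
        rcases ht with rfl | rfl | rfl
        · exact Finset.mem_filter.2 ⟨hmem, hfacxy, by simp⟩
        · exact Finset.mem_filter.2 ⟨(hfac b₁ hb₁).1, hfac b₁ hb₁, by simp⟩
        · exact Finset.mem_filter.2 ⟨(hfac b₂ hb₂).1, hfac b₂ hb₂, by simp⟩
      have hcard3 : ({({x, y} : Finset V), {x, b₁}, {x, b₂}} : Finset (Finset V)).card = 3 := by
        have h1 : y ∉ B := hy
        have hyb₁ : y ≠ b₁ := fun h => hy (h ▸ Finset.mem_of_mem_erase hb₁)
        have hyb₂ : y ≠ b₂ := fun h => hy (h ▸ Finset.mem_of_mem_erase hb₂)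
        have hb₁x : b₁ ≠ x := Finset.ne_of_mem_erase hb₁
        have hb₂x : b₂ ≠ x := Finset.ne_of_mem_erase hb₂
        have e1 : ({x, y} : Finset V) ≠ {x, b₁} := by
          intro h
          have : y ∈ ({x, b₁} : Finset V) := h ▸ (by simp : y ∈ ({x, y} : Finset V))
          simp only [Finset.mem_insert, Finset.mem_singleton] at this
          tauto
        have e2 : ({x, y} : Finset V) ≠ {x, b₂} := by
          intro h
          have : y ∈ ({x, b₂} : Finset V) := h ▸ (by simp : y ∈ ({x, y} : Finset V))
          simp only [Finset.mem_insert, Finset.mem_singleton] at this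
          tauto
        have e3 : ({x, b₁} : Finset V) ≠ {x, b₂} := by
          intro h
          have : b₁ ∈ ({x, b₂} : Finset V) := h ▸ (by simp : b₁ ∈ ({x, b₁} : Finset V))
          simp only [Finset.mem_insert, Finset.mem_singleton] at this
          tauto
        rw [Finset.card_insert_of_notMem (by simp [e1, e2]),
          Finset.card_insert_of_notMem (by simp [e3]), Finset.card_singleton]
      have := Finset.card_le_card htriple
      rw [hcard3, hfil] at this
      omega
    · -- inductive step : dimension d + 1 ≥ 2
      set L := link X ({x} : Finset V) with hLdef
      have hxv : x ∈ vertexSet X := aux_mem_vertexSet.2 ⟨{x, y}, hmem, by simp⟩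
      have hwL : IsWeakPM L d := aux_link_weakPM hw hxv
      have hxX : ({x} : Finset V) ∈ X :=
        hw.1.2 _ hmem {x} (by simp) ⟨x, Finset.mem_singleton_self x⟩
      have hlinksL : ∀ s ∈ L, s.card ≤ d - 1 → CConnected (link L s) := by
        intro s hs hcard
        have hsl := aux_mem_link.1 hs
        have hxs : x ∉ s := Finset.disjoint_singleton_left.1 hsl.2.1
        rw [hLdef, aux_link_link hw.1 hsl.2.1]
        have hcs : ({x} ∪ s).card ≤ d := by
          rw [Finset.insert_eq] at *
          rw [← Finset.insert_eq, Finset.card_insert_of_notMem hxs]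
          omega
        exact hlinks _ hsl.2.2 (by omega)
      set B' := B.erase x with hB'def
      have hB' : B'.card = d + 2 := by
        rw [hB'def, Finset.card_erase_of_mem hx, hB]
        omega
      have hsub' : ∀ s ⊆ B', s.Nonempty → s ≠ B' → s ∈ L := by
        intro s hsB' hsne hsnB'
        have hxs : x ∉ s := fun h => (Finset.mem_erase.1 (hsB' h)).1 rfl
        have hsB : s ⊆ B := hsB'.trans (Finset.erase_subset x B)
        have hsX : s ∈ X := hsub s hsB hsne (fun h => hxs (h ▸ hx))
        have hcards : s.card < d + 2 := by
          rw [← hB']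
          exact Finset.card_lt_card (Finset.ssubset_iff_subset_ne.2 ⟨hsB', hsnB'⟩)
        have hins : insert x s ∈ X := by
          refine hsub _ ?_ ⟨x, Finset.mem_insert_self x s⟩ ?_
          · exact Finset.insert_subset hx hsB
          · intro h
            have := h ▸ hB
            rw [Finset.card_insert_of_notMem hxs] at this
            omega
        rw [aux_mem_link]
        exact ⟨hsX, Finset.disjoint_singleton_left.2 hxs, by rwa [← Finset.insert_eq]⟩
      have hyL : y ∈ vertexSet L := by
        refine aux_mem_vertexSet.2 ⟨{y}, ?_, Finset.mem_singleton_self y⟩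
        rw [aux_mem_link]
        refine ⟨hw.1.2 _ hmem {y} (by simp) ⟨y, Finset.mem_singleton_self y⟩, ?_, ?_⟩
        · simp [Ne.symm hxy, hxy]
        · rw [← Finset.insert_eq]
          exact hmem
      obtain ⟨b, hb⟩ : B'.Nonempty := by rw [← Finset.card_pos, hB']; omega
      have hbL : b ∈ vertexSet L := by
        refine aux_mem_vertexSet.2 ⟨{b}, ?_, Finset.mem_singleton_self b⟩
        refine hsub' {b} (Finset.singleton_subset_iff.2 hb) ⟨b, Finset.mem_singleton_self b⟩ ?_
        intro h
        have := h ▸ hB'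
        rw [Finset.card_singleton] at this
        omega
      have hconnL : CConnected L := hlinks {x} hxX (by simp; omega)
      obtain ⟨w⟩ := hconnL.2 b hbL y hyL
      obtain ⟨p, hp, q, hq, hadj⟩ := aux_cross w hb (fun h => hy (Finset.mem_of_mem_erase h))
      exact ih hd1 L hwL hlinksL B' hB' hsub' p hp q hq hadj.2

/-- In a normal `d`-pseudomanifold (`d ≥ 2`) other than the standard `d`-sphere, any two
vertices of degree `d+1` are non-adjacent. -/
theorem stmt7 {V : Type} [DecidableEq V] (d : ℕ) (hd : 2 ≤ d)
    (X : Finset (Finset V)) (hX : IsNormalPM X d) (hns : ¬ IsStandardSphere X d)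
    (u v : V) (hu : u ∈ vertexSet X) (hv : v ∈ vertexSet X)
    (hdu : vertDegree X u = d + 1) (hdv : vertDegree X v = d + 1) :
    ¬ (edgeGraph X).Adj u v := by
  rintro ⟨hune, huv⟩
  have hw : IsWeakPM X d := hX.1
  have hcomp := hw.1
  have hd1 : 1 ≤ d := by omega
  set A := vertexSet (link X ({u} : Finset V)) with hAdef
  have hA : A.card = d + 1 := hdu
  have hS1 := aux_step1 hd1 hw hu hdu
  set A' := vertexSet (link X ({v} : Finset V)) with hA'def
  have hA' : A'.card = d + 1 := hdv
  have hS1' := aux_step1 hd1 hw hv hdv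
  have huA : u ∉ A := by
    intro h
    obtain ⟨s, hs, hus⟩ := aux_mem_vertexSet.1 h
    exact Finset.disjoint_singleton_left.1 (aux_mem_link.1 hs).2.1 hus
  have hvA' : v ∉ A' := by
    intro h
    obtain ⟨s, hs, hus⟩ := aux_mem_vertexSet.1 h
    exact Finset.disjoint_singleton_left.1 (aux_mem_link.1 hs).2.1 hus
  have hvA : v ∈ A := by
    refine aux_mem_vertexSet.2 ⟨{v}, ?_, Finset.mem_singleton_self v⟩
    rw [aux_mem_link]
    refine ⟨hcomp.2 _ huv {v} (by simp) ⟨v, Finset.mem_singleton_self v⟩, by simp [Ne.symm hune, hune], ?_⟩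
    rw [← Finset.insert_eq]
    exact huv
  have huA' : u ∈ A' := by
    refine aux_mem_vertexSet.2 ⟨{u}, ?_, Finset.mem_singleton_self u⟩
    rw [aux_mem_link]
    refine ⟨hcomp.2 _ huv {u} (by simp) ⟨u, Finset.mem_singleton_self u⟩,
      by simp [hune, Ne.symm hune], ?_⟩
    rw [← Finset.insert_eq, Finset.pair_comm]
    exact huv
  have hsubA' : A.erase v ⊆ A' := by
    intro a ha
    have hav : a ≠ v := Finset.ne_of_mem_erase ha
    have haA : a ∈ A := Finset.mem_of_mem_erase ha
    have hva : ({v, a} : Finset V) ∈ X := by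
      have h2 : ({v, a} : Finset V) ⊆ A := by
        intro z hz
        rcases Finset.mem_insert.1 hz with rfl | hz
        · exact hvA
        · rwa [Finset.mem_singleton.1 hz]
      have hc2 : ({v, a} : Finset V).card = 2 := Finset.card_pair (Ne.symm hav)
      exact aux_link_subset (hS1 _ h2 ⟨v, by simp⟩ (by omega))
    refine aux_mem_vertexSet.2 ⟨{a}, ?_, Finset.mem_singleton_self a⟩
    rw [aux_mem_link]
    refine ⟨hcomp.2 _ hva {a} (by simp) ⟨a, Finset.mem_singleton_self a⟩, by simp [hav, Ne.symm hav], ?_⟩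
    rw [← Finset.insert_eq]
    exact hva
  have hcerase : (A.erase v).card = d := by
    rw [Finset.card_erase_of_mem hvA, hA]
    omega
  have huerase : u ∉ A.erase v := fun h => huA (Finset.mem_of_mem_erase h)
  have hA'eq : insert u (A.erase v) = A' := by
    apply Finset.eq_of_subset_of_card_le (Finset.insert_subset huA' hsubA')
    rw [hA', Finset.card_insert_of_notMem huerase, hcerase]
  have hAX : A ∈ X := by
    have hmem' : A.erase v ∈ link X {v} := by
      refine hS1' _ ?_ ?_ (by omega)
      · rw [← hA'def, ← hA'eq]; exact Finset.subset_insert u (A.erase v)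
      · rw [← Finset.card_pos, hcerase]; omega
    have := (aux_mem_link.1 hmem').2.2
    rwa [← Finset.insert_eq, Finset.insert_erase hvA] at this
  set B := insert u A with hBdef
  have hB : B.card = d + 2 := by
    rw [hBdef, Finset.card_insert_of_notMem huA, hA]
  have hsubB : ∀ s ⊆ B, s.Nonempty → s ≠ B → s ∈ X := by
    intro s hsB hsne hsnB
    by_cases hus : u ∈ s
    · have hse : s.erase u ⊆ A := by
        intro z hz
        have hzu : z ≠ u := Finset.ne_of_mem_erase hz
        rcases Finset.mem_insert.1 (hsB (Finset.mem_of_mem_erase hz)) with h | h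
        · exact absurd h hzu
        · exact h
      rcases Finset.eq_empty_or_nonempty (s.erase u) with hemp | hne
      · have : s = {u} := by
          rcases (Finset.erase_eq_empty_iff _ _).1 hemp with h | h
          · exact absurd h (Finset.nonempty_iff_ne_empty.1 hsne)
          · exact h
        rw [this]
        exact aux_singleton_mem hcomp hu
      · have hsenA : s.erase u ≠ A := by
          intro h
          apply hsnB
          rw [← Finset.insert_erase hus, h, hBdef]
        have hcard : (s.erase u).card ≤ d := by
          have := Finset.card_lt_card (Finset.ssubset_iff_subset_ne.2 ⟨hse, hsenA⟩)
          omega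
        have hmem' := hS1 _ hse hne hcard
        have := (aux_mem_link.1 hmem').2.2
        rwa [← Finset.insert_eq, Finset.insert_erase hus] at this
    · have hsA : s ⊆ A := by
        intro z hz
        rcases Finset.mem_insert.1 (hsB hz) with rfl | h
        · exact absurd hz hus
        · exact h
      rcases eq_or_ne s A with rfl | hsnA
      · exact hAX
      · have hcard : s.card ≤ d := by
          have := Finset.card_lt_card (Finset.ssubset_iff_subset_ne.2 ⟨hsA, hsnA⟩)
          omega
        exact aux_link_subset (hS1 _ hsA hsne hcard)
  have hvsX : vertexSet X = B := by
    apply Finset.Subset.antisymm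
    · intro w hwv
      by_contra hwB
      obtain ⟨wk⟩ := hX.2.1.2 u hu w hwv
      obtain ⟨p, hp, q, hq, hadj⟩ := aux_cross wk (Finset.mem_insert_self u A) hwB
      exact aux_nosep d hd1 X hw hX.2.2 B hB hsubB p hp q hq hadj.2
    · intro b hbB
      refine aux_mem_vertexSet.2 ⟨{b}, ?_, Finset.mem_singleton_self b⟩
      refine hsubB {b} (Finset.singleton_subset_iff.2 hbB) ⟨b, Finset.mem_singleton_self b⟩ ?_
      intro h
      have := h ▸ hB
      rw [Finset.card_singleton] at this
      omega
  apply hns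
  refine ⟨B, hB, ?_⟩
  ext s
  rw [Finset.mem_filter, Finset.mem_powerset]
  constructor
  · intro hs
    refine ⟨hvsX ▸ aux_face_subset_vertexSet hs, hcomp.1 s hs, ?_⟩
    intro h
    have h1 : s.card ≤ d + 1 := aux_face_card_le hw.2.1 hs
    rw [h, hB] at h1
    omega
  · rintro ⟨h1, h2, h3⟩
    exact hsubB s h1 h2 h3

end
end
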